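/- arXiv:2206.11924 — 6 statements merged into one kernel-verified Lean document; each statement's English description precedes it below -/
import Mathlib

section
/- Let Φ be a monotone NAE-3-SAT instance in which each variable occurs in exactly four clauses, and let G(Φ) be the edge-colored graph constructed from Φ. Then Φ has a not-all-equal truth assignment if and only if the edge set of G(Φ) can be partitioned into two rainbow spanning trees. -/
namespace PackingRainbowStmt0

/-- An edge of the multigraph connects via set `F`: there is an edge in `F` with
endpoints `a` and `b`. -/
def Step {V E : Type*} (ends : E → Sym2 V) (F : Set E) (a b : V) : Prop :=
  ∃ e ∈ F, ends e = s(a, b)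

/-- The edge set `F` makes the multigraph with endpoint map `ends` connected
(any two vertices are joined by a walk using edges of `F`). -/
def Connects {V E : Type*} (ends : E → Sym2 V) (F : Set E) : Prop :=
  ∀ a b : V, Relation.ReflTransGen (Step ends F) a b

/-- `F` is a spanning tree: it connects all vertices, minimally so. -/
def IsSpanningTree {V E : Type*} (ends : E → Sym2 V) (F : Set E) : Prop :=
  Connects ends F ∧ ∀ e ∈ F, ¬ Connects ends (F \ {e})

/-- `F` is rainbow: each color class contains at most one edge of `F`. -/
def Rainbow {E C : Type*} (color : E → C) (F : Set E) : Prop :=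
  ∀ e ∈ F, ∀ f ∈ F, color e = color f → e = f

/-- A monotone NAE-3-SAT instance with `n` variables and `m` clauses in which every
clause contains three distinct variables and every variable occurs in exactly four
clauses.  `occ (j, q) = (i, p)` means that the `q`-th variable of clause `j` is the
variable `i`, and that this is the `p`-th occurrence of `i` in the order of the
clauses.  Bijectivity of `occ` encodes that every variable occurs exactly four times. -/
structure NAE4Instance (n m : ℕ) where
  occ : (Fin m × Fin 3) ≃ (Fin n × Fin 4)
  distinct : ∀ j : Fin m, Function.Injective fun q : Fin 3 => (occ (j, q)).1
  mono : ∀ j q j' q', (occ (j, q)).1 = (occ (j', q')).1 →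
    Prod.Lex (· < ·) (· < ·) (j, q) (j', q') → (occ (j, q)).2 < (occ (j', q')).2

/-- `Φ` has a not-all-equal truth assignment: every clause contains
at least one true and at least one false variable. -/
def HasNAEAssignment {n m : ℕ} (Φ : NAE4Instance n m) : Prop :=
  ∃ a : Fin n → Bool, ∀ j : Fin m,
    (∃ q : Fin 3, a (Φ.occ (j, q)).1 = true) ∧ (∃ q : Fin 3, a (Φ.occ (j, q)).1 = false)

/-- Vertices of the graph `G(Φ)`: for every variable `i` and `p ∈ [4]` the four
vertices `u i p, v i p, w i p, z i p` of a `K₄`; for every clause `j` the triangle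
vertices `c j q`; and the extra vertex `r`. -/
inductive Vtx (n m : ℕ) where
  | u (i : Fin n) (p : Fin 4)
  | v (i : Fin n) (p : Fin 4)
  | w (i : Fin n) (p : Fin 4)
  | z (i : Fin n) (p : Fin 4)
  | c (j : Fin m) (q : Fin 3)
  | r
  deriving DecidableEq, Fintype

/-- Edges of `G(Φ)`: the six edges of each `K₄`; the triangle edges
`c j q — c j (q+1)`; the edges `z^{i_q}_ℓ — c j q`; and two parallel
edges between `r` and each `u i p`. -/
inductive Edg (n m : ℕ) where
  | uv (i : Fin n) (p : Fin 4)
  | uw (i : Fin n) (p : Fin 4)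
  | uz (i : Fin n) (p : Fin 4)
  | vw (i : Fin n) (p : Fin 4)
  | vz (i : Fin n) (p : Fin 4)
  | wz (i : Fin n) (p : Fin 4)
  | tri (j : Fin m) (q : Fin 3)
  | zc (j : Fin m) (q : Fin 3)
  | ru (i : Fin n) (p : Fin 4) (b : Fin 2)
  deriving DecidableEq, Fintype

/-- The colors of the edge-coloring of `G(Φ)`. -/
inductive Col (n m : ℕ) where
  | rpar (i : Fin n) (p : Fin 4)
  | ca (i : Fin n) (p : Fin 4)
  | cb (i : Fin n) (p : Fin 4)
  | cc (i : Fin n) (p : Fin 4)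
  | cd (i : Fin n) (p : Fin 4)
  deriving DecidableEq, Fintype

/-- Endpoints of the edges of `G(Φ)`. -/
def ends {n m : ℕ} (Φ : NAE4Instance n m) : Edg n m → Sym2 (Vtx n m)
  | .uv i p => s(.u i p, .v i p)
  | .uw i p => s(.u i p, .w i p)
  | .uz i p => s(.u i p, .z i p)
  | .vw i p => s(.v i p, .w i p)
  | .vz i p => s(.v i p, .z i p)
  | .wz i p => s(.w i p, .z i p)
  | .tri j q => s(.c j q, .c j (q + 1))
  | .zc j q => s(.z (Φ.occ (j, q)).1 (Φ.occ (j, q)).2, .c j q)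
  | .ru i p _ => s(.r, .u i p)

/-- The edge-coloring of `G(Φ)`: the two parallel edges at `r` to `u i p` form the
class `rpar i p`; the classes corresponding to variable `i` and `p ∈ [4]` are
`ca i p = {w^i_p z^i_p, z^i_p c^{j_p}_{q_p}}`, `cb i p = {v^i_p z^i_p, u^i_{p+1} v^i_{p+1}}`,
`cc i p = {u^i_p z^i_p, v^i_p w^i_p}` and `cd i p = {u^i_p w^i_p, c^{j_p}_{q_p} c^{j_p}_{q_p+1}}`,
where `c^{j_p}_{q_p}` is the triangle neighbor of `z^i_p`, i.e. `(j_p, q_p) = Φ.occ.symm (i, p)`. -/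
def color {n m : ℕ} (Φ : NAE4Instance n m) : Edg n m → Col n m
  | .ru i p _ => .rpar i p
  | .wz i p => .ca i p
  | .zc j q => .ca (Φ.occ (j, q)).1 (Φ.occ (j, q)).2
  | .vz i p => .cb i p
  | .uv i p => .cb i (p - 1)
  | .uz i p => .cc i p
  | .vw i p => .cc i p
  | .uw i p => .cd i p
  | .tri j q => .cd (Φ.occ (j, q)).1 (Φ.occ (j, q)).2

/-- The edge set of `G(Φ)` can be partitioned into the two rainbow
spanning trees `T₁` and `T₂`. -/
def TwoRainbowSpanningTrees {n m : ℕ} (Φ : NAE4Instance n m) (T₁ T₂ : Set (Edg n m)) : Prop :=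
  T₁ ∪ T₂ = Set.univ ∧ Disjoint T₁ T₂ ∧
    IsSpanningTree (ends Φ) T₁ ∧ IsSpanningTree (ends Φ) T₂ ∧
    Rainbow (color Φ) T₁ ∧ Rainbow (color Φ) T₂

set_option linter.unreachableTactic false
set_option linter.unusedTactic false

section Generic
variable {V E : Type*} {ends : E → Sym2 V} {F : Set E}

lemma step_symm {a b : V} (h : Step ends F a b) : Step ends F b a := by
  obtain ⟨e, he, hE⟩ := h
  exact ⟨e, he, by rw [hE, Sym2.eq_swap]⟩

lemma rtg_symm {a b : V} (h : Relation.ReflTransGen (Step ends F) a b) :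
    Relation.ReflTransGen (Step ends F) b a :=
  haveI : Std.Symm (Step ends F) := ⟨fun _ _ => step_symm⟩
  Std.Symm.symm _ _ h

lemma reroute {e : E} {a b : V} (hE : ends e = s(a, b))
    (hab : Relation.ReflTransGen (Step ends (F \ {e})) a b) :
    ∀ x y, Relation.ReflTransGen (Step ends F) x y →
      Relation.ReflTransGen (Step ends (F \ {e})) x y := by
  intro x y h
  induction h with
  | refl => exact .refl
  | tail _ hstep ih =>
    rename_i u v _
    refine ih.trans ?_
    obtain ⟨f, hf, hends⟩ := hstep
    by_cases hfe : f = e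
    · subst hfe
      rw [hE] at hends
      rcases Sym2.eq_iff.mp hends.symm with ⟨h1, h2⟩ | ⟨h1, h2⟩
      · subst h1; subst h2; exact hab
      · subst h1; subst h2; exact rtg_symm hab
    · exact Relation.ReflTransGen.single ⟨f, ⟨hf, hfe⟩, hends⟩

lemma no_triangle {e f g : E} {a b c : V} (hT : IsSpanningTree ends F)
    (he : e ∈ F) (hf : f ∈ F) (hg : g ∈ F) (hef : e ≠ f) (heg : e ≠ g)
    (hA : ends e = s(a, b)) (hB : ends f = s(b, c)) (hC : ends g = s(a, c)) : False := by
  refine hT.2 e he fun x y => ?_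
  refine reroute hA ?_ x y (hT.1 x y)
  have s1 : Step ends (F \ {e}) a c := ⟨g, ⟨hg, fun h => heg h.symm⟩, hC⟩
  have s2 : Step ends (F \ {e}) c b :=
    ⟨f, ⟨hf, fun h => hef h.symm⟩, by rw [hB, Sym2.eq_swap]⟩
  exact (Relation.ReflTransGen.single s1).tail s2

lemma isSpanningTree_of_parent (r : V) (parent : V → V) (rank : V → ℕ)
    (ed : (x : V) → x ≠ r → E)
    (hpr : parent r = r)
    (hrank : ∀ x (_ : x ≠ r), rank (parent x) < rank x)
    (hends : ∀ x (hx : x ≠ r), ends (ed x hx) = s(x, parent x))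
    (hedinj : ∀ x hx y hy, ed x hx = ed y hy → x = y)
    (T : Set E) (hT : ∀ e, e ∈ T ↔ ∃ x, ∃ hx : x ≠ r, ed x hx = e) :
    IsSpanningTree ends T := by
  have hroot : ∀ x, Relation.ReflTransGen (Step ends T) x r := by
    have key : ∀ k x, rank x ≤ k → Relation.ReflTransGen (Step ends T) x r := by
      intro k
      induction k with
      | zero =>
        intro x hx
        by_cases h : x = r
        · subst h; exact .refl
        · exact absurd (Nat.lt_of_lt_of_le (hrank x h) hx) (Nat.not_lt_zero _)
      | succ k ih =>
        intro x hx
        by_cases h : x = r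
        · subst h; exact .refl
        · refine Relation.ReflTransGen.head ⟨ed x h, (hT _).mpr ⟨x, h, rfl⟩, hends x h⟩ ?_
          exact ih _ (Nat.le_of_lt_succ (Nat.lt_of_lt_of_le (hrank x h) hx))
    exact fun x => key (rank x) x le_rfl
  constructor
  · exact fun x y => (hroot x).trans (rtg_symm (hroot y))
  · rintro e he hconn
    obtain ⟨x₀, hx₀, rfl⟩ := (hT e).mp he
    -- invariant: being a descendant of x₀
    set φ : V → Prop := fun y => ∃ k, parent^[k] y = x₀ with hφ
    have hstep : ∀ y y', Step ends (T \ {ed x₀ hx₀}) y y' → (φ y ↔ φ y') := by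
      rintro y y' ⟨f, ⟨hfT, hfne⟩, hfe⟩
      obtain ⟨x, hx, rfl⟩ := (hT f).mp hfT
      have hxx₀ : x ≠ x₀ := by
        rintro rfl; exact hfne rfl
      have key : φ x ↔ φ (parent x) := by
        constructor
        · rintro ⟨k, hk⟩
          cases k with
          | zero => exact absurd hk hxx₀
          | succ k => exact ⟨k, by rwa [Function.iterate_succ_apply] at hk⟩
        · rintro ⟨k, hk⟩
          exact ⟨k + 1, by rwa [Function.iterate_succ_apply]⟩
      rw [hends x hx] at hfe
      rcases Sym2.eq_iff.mp hfe with ⟨h1, h2⟩ | ⟨h1, h2⟩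
      · subst h1; subst h2; exact key
      · subst h1; subst h2; exact key.symm
    have hpres : ∀ y y', Relation.ReflTransGen (Step ends (T \ {ed x₀ hx₀})) y y' →
        (φ y ↔ φ y') := by
      intro y y' h
      induction h with
      | refl => exact Iff.rfl
      | tail _ hs ih => exact ih.trans (hstep _ _ hs)
    have hr : ¬ φ r := by
      rintro ⟨k, hk⟩
      have : parent^[k] r = r := Function.iterate_fixed hpr k
      exact hx₀ ((this ▸ hk).symm)
    exact hr ((hpres x₀ r (hconn x₀ r)).mp ⟨0, rfl⟩)

end Generic

section Construction
variable {n m : ℕ} (Φ : NAE4Instance n m)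

def sel (a : Fin n → Bool) (β : Fin 2) : Edg n m → Prop
  | .ru _ _ b => b = β
  | .uv i _ => a i = false
  | .uw i _ => a i = true
  | .uz i _ => a i = true
  | .vw i _ => a i = false
  | .vz i _ => a i = true
  | .wz i _ => a i = false
  | .zc j q => a (Φ.occ (j, q)).1 = true
  | .tri j q => a (Φ.occ (j, q)).1 = false

def parent (a : Fin n → Bool) : Vtx n m → Vtx n m
  | .r => .r
  | .u _ _ => .r
  | .v i p => if a i then .z i p else .u i p
  | .w i p => if a i then .u i p else .v i p
  | .z i p => if a i then .u i p else .w i p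
  | .c j q => if a (Φ.occ (j, q)).1 then .z (Φ.occ (j, q)).1 (Φ.occ (j, q)).2
              else .c j (q + 1)

def rnk (a : Fin n → Bool) : Vtx n m → ℕ
  | .r => 0
  | .u _ _ => 1
  | .v i _ => if a i then 3 else 2
  | .w i _ => if a i then 2 else 3
  | .z i _ => if a i then 2 else 4
  | .c j q => if a (Φ.occ (j, q)).1 then 3
              else if a (Φ.occ (j, q + 1)).1 then 4 else 5

def ed (a : Fin n → Bool) (β : Fin 2) : (x : Vtx n m) → x ≠ Vtx.r → Edg n m
  | .u i p, _ => .ru i p β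
  | .v i p, _ => if a i then .vz i p else .uv i p
  | .w i p, _ => if a i then .uw i p else .vw i p
  | .z i p, _ => if a i then .uz i p else .wz i p
  | .c j q, _ => if a (Φ.occ (j, q)).1 then .zc j q else .tri j q
  | .r, h => absurd rfl h


lemma fin3_cases : ∀ q q' : Fin 3, q' = q ∨ q' = q + 1 ∨ q' = q + 1 + 1 := by decide

lemma rnk_parent_lt (a : Fin n → Bool)
    (hnae : ∀ j : Fin m, ∃ q : Fin 3, a (Φ.occ (j, q)).1 = true) :
    ∀ x : Vtx n m, x ≠ Vtx.r → rnk Φ a (parent Φ a x) < rnk Φ a x := by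
  intro x hx
  cases x with
  | r => exact absurd rfl hx
  | u i p => simp [parent, rnk]
  | v i p => cases h : a i <;> simp [parent, rnk, h]
  | w i p => cases h : a i <;> simp [parent, rnk, h]
  | z i p => cases h : a i <;> simp [parent, rnk, h]
  | c j q =>
    cases h : a (Φ.occ (j, q)).1 with
    | true => cases h2 : a ((Φ.occ (j, q)).1) <;> simp_all [parent, rnk]
    | false =>
      simp only [parent, rnk, h, if_false, Bool.false_eq_true]
      cases h2 : a (Φ.occ (j, q + 1)).1 with
      | true => simp [h2]
      | false =>
        have h3 : a (Φ.occ (j, q + 1 + 1)).1 = true := by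
          obtain ⟨q', hq'⟩ := hnae j
          rcases fin3_cases q q' with rfl | rfl | rfl
          · rw [hq'] at h; cases h
          · rw [hq'] at h2; cases h2
          · exact hq'
        simp [h2, h3]

lemma ends_ed (a : Fin n → Bool) (β : Fin 2) :
    ∀ (x : Vtx n m) (hx : x ≠ Vtx.r),
      ends Φ (ed Φ a β x hx) = s(x, parent Φ a x) := by
  intro x hx
  cases x with
  | r => exact absurd rfl hx
  | u i p => simp [ed, parent, ends, Sym2.eq_swap]
  | v i p => cases h : a i <;> simp [ed, parent, ends, h, Sym2.eq_swap]
  | w i p => cases h : a i <;> simp [ed, parent, ends, h, Sym2.eq_swap]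
  | z i p => cases h : a i <;> simp [ed, parent, ends, h, Sym2.eq_swap]
  | c j q => cases h : a (Φ.occ (j, q)).1 <;> simp [ed, parent, ends, h, Sym2.eq_swap]

lemma ed_inj (a : Fin n → Bool) (β : Fin 2) :
    ∀ (x : Vtx n m) (hx : x ≠ Vtx.r) (y : Vtx n m) (hy : y ≠ Vtx.r),
      ed Φ a β x hx = ed Φ a β y hy → x = y := by
  intro x hx y hy h
  cases x <;> cases y <;>
    first
      | exact absurd rfl hx
      | exact absurd rfl hy
      | (simp only [ed] at h; split_ifs at h <;> simp_all)
      | simp_all [ed]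

lemma mem_sel_iff (a : Fin n → Bool) (β : Fin 2) (e : Edg n m) :
    sel Φ a β e ↔ ∃ x, ∃ hx : x ≠ Vtx.r, ed Φ a β x hx = e := by
  constructor
  · intro hsel
    cases e with
    | uv i p => exact ⟨.v i p, by simp, by simp_all [ed, sel]⟩
    | uw i p => exact ⟨.w i p, by simp, by simp_all [ed, sel]⟩
    | uz i p => exact ⟨.z i p, by simp, by simp_all [ed, sel]⟩
    | vw i p => exact ⟨.w i p, by simp, by simp_all [ed, sel]⟩
    | vz i p => exact ⟨.v i p, by simp, by simp_all [ed, sel]⟩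
    | wz i p => exact ⟨.z i p, by simp, by simp_all [ed, sel]⟩
    | tri j q => exact ⟨.c j q, by simp, by simp_all [ed, sel]⟩
    | zc j q => exact ⟨.c j q, by simp, by simp_all [ed, sel]⟩
    | ru i p b =>
      refine ⟨.u i p, by simp, ?_⟩
      have : b = β := hsel
      simp [ed, this]
  · rintro ⟨x, hx, rfl⟩
    cases x with
    | r => exact absurd rfl hx
    | u i p => simp [ed, sel]
    | v i p => cases h : a i <;> simp [ed, sel, h]
    | w i p => cases h : a i <;> simp [ed, sel, h]
    | z i p => cases h : a i <;> simp [ed, sel, h]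
    | c j q => cases h : a (Φ.occ (j, q)).1 <;> simp [ed, sel, h]


lemma spanning_sel (a : Fin n → Bool) (β : Fin 2)
    (hnae : ∀ j : Fin m, ∃ q : Fin 3, a (Φ.occ (j, q)).1 = true) :
    IsSpanningTree (ends Φ) {e | sel Φ a β e} :=
  isSpanningTree_of_parent Vtx.r (parent Φ a) (rnk Φ a) (ed Φ a β) rfl
    (rnk_parent_lt Φ a hnae) (ends_ed Φ a β) (ed_inj Φ a β)
    _ (fun e => (mem_sel_iff Φ a β e))

lemma occ_pair_inj {j q j' q'} (h1 : (Φ.occ (j, q)).1 = (Φ.occ (j', q')).1)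
    (h2 : (Φ.occ (j, q)).2 = (Φ.occ (j', q')).2) : j = j' ∧ q = q' := by
  have := Φ.occ.injective (Prod.ext h1 h2)
  exact ⟨congrArg Prod.fst this, congrArg Prod.snd this⟩

lemma rainbow_sel (a : Fin n → Bool) (β : Fin 2) :
    Rainbow (color Φ) {e | sel Φ a β e} := by
  intro e he f hf hc
  simp only [Set.mem_setOf_eq] at he hf
  cases e <;> cases f <;>
    simp only [color, Col.rpar.injEq, Col.ca.injEq, Col.cb.injEq, Col.cc.injEq,
      Col.cd.injEq, reduceCtorEq] at hc <;>
    first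
    | exact hc.elim
    | (obtain ⟨rfl, h2⟩ := hc
       first
       | simp_all [sel]
       | (have : _ = _ := sub_left_injective h2; simp_all [sel]))
    | (obtain ⟨h1, h2⟩ := occ_pair_inj Φ hc.1 hc.2; simp_all)


lemma compl_sel (a : Fin n → Bool) :
    {e : Edg n m | sel Φ (fun i => !a i) 1 e} = {e | sel Φ a 0 e}ᶜ := by
  ext e
  cases e <;>
    simp only [Set.mem_setOf_eq, Set.mem_compl_iff, sel] <;>
    first
      | (cases a ‹Fin n› <;> simp)
      | (rename_i i _; cases a i <;> simp)
      | (rename_i j q; cases a (Φ.occ (j, q)).1 <;> simp)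
      | (rename_i b; revert b; decide)

end Construction

lemma keyProp {E D G Vw B A : Prop}
    (pcc : G ↔ ¬Vw)
    (t1 : ¬(E ∧ Vw ∧ D)) (t2 : ¬(E ∧ B ∧ G)) (t3 : ¬(D ∧ A ∧ G)) (t4 : ¬(Vw ∧ A ∧ B))
    (s1 : ¬(¬E ∧ ¬Vw ∧ ¬D)) (s2 : ¬(¬E ∧ ¬B ∧ ¬G)) (s3 : ¬(¬D ∧ ¬A ∧ ¬G))
    (s4 : ¬(¬Vw ∧ ¬A ∧ ¬B)) :
    (D ↔ B) ∧ (B ↔ ¬E) := by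
  rcases em E with hE | hE <;> rcases em D with hD | hD <;>
    rcases em G with hG | hG <;> rcases em Vw with hVw | hVw <;>
    rcases em B with hB | hB <;> rcases em A with hA | hA <;>
    simp_all

/-- `Φ` has a not-all-equal truth assignment if and only if the edge
set of the edge-colored graph `G(Φ)` can be partitioned into two rainbow spanning trees. -/
theorem nae_iff_two_rainbow_spanning_trees {n m : ℕ} (Φ : NAE4Instance n m) :
    HasNAEAssignment Φ ↔ ∃ T₁ T₂ : Set (Edg n m), TwoRainbowSpanningTrees Φ T₁ T₂ := by
  constructor
  · rintro ⟨a, ha⟩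
    refine ⟨{e | sel Φ a 0 e}, {e | sel Φ a 0 e}ᶜ, Set.union_compl_self _,
      disjoint_compl_right, spanning_sel Φ a 0 (fun j => (ha j).1), ?_,
      rainbow_sel Φ a 0, ?_⟩
    · rw [← compl_sel]
      refine spanning_sel Φ _ 1 (fun j => ?_)
      obtain ⟨q, hq⟩ := (ha j).2
      exact ⟨q, by simp [hq]⟩
    · rw [← compl_sel]
      exact rainbow_sel Φ _ 1
  · rintro ⟨T₁, T₂, hU, hD, hS1, hS2, hR1, hR2⟩
    classical
    have hcompl : ∀ e, e ∈ T₂ ↔ e ∉ T₁ := by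
      intro e
      constructor
      · intro h2 h1; exact (Set.disjoint_left.mp hD) h1 h2
      · intro h1
        have he : e ∈ T₁ ∪ T₂ := hU ▸ Set.mem_univ e
        rcases he with h | h
        · exact absurd h h1
        · exact h
    have pair : ∀ e f : Edg n m, e ≠ f → color Φ e = color Φ f →
        (e ∈ T₁ ↔ f ∉ T₁) := by
      intro e f hne hc
      constructor
      · intro he hf; exact hne (hR1 e he f hf hc)
      · intro hf
        by_contra he
        exact hne (hR2 e ((hcompl e).mpr he) f ((hcompl f).mpr hf) hc)
    have key : ∀ (i : Fin n) (p : Fin 4),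
        (Edg.uw i p ∈ T₁ ↔ Edg.vz i p ∈ T₁) ∧
        (Edg.vz i p ∈ T₁ ↔ Edg.uv i p ∉ T₁) := by
      intro i p
      have pcc : Edg.uz i p ∈ T₁ ↔ Edg.vw i p ∉ T₁ := pair _ _ (by simp) rfl
      have t1 : ¬(Edg.uv i p ∈ T₁ ∧ Edg.vw i p ∈ T₁ ∧ Edg.uw i p ∈ T₁) := by
        rintro ⟨h1, h2, h3⟩
        exact no_triangle hS1 h1 h2 h3 (by simp) (by simp) rfl rfl rfl
      have t2 : ¬(Edg.uv i p ∈ T₁ ∧ Edg.vz i p ∈ T₁ ∧ Edg.uz i p ∈ T₁) := by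
        rintro ⟨h1, h2, h3⟩
        exact no_triangle hS1 h1 h2 h3 (by simp) (by simp) rfl rfl rfl
      have t3 : ¬(Edg.uw i p ∈ T₁ ∧ Edg.wz i p ∈ T₁ ∧ Edg.uz i p ∈ T₁) := by
        rintro ⟨h1, h2, h3⟩
        exact no_triangle hS1 h1 h2 h3 (by simp) (by simp) rfl rfl rfl
      have t4 : ¬(Edg.vw i p ∈ T₁ ∧ Edg.wz i p ∈ T₁ ∧ Edg.vz i p ∈ T₁) := by
        rintro ⟨h1, h2, h3⟩
        exact no_triangle hS1 h1 h2 h3 (by simp) (by simp) rfl rfl rfl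
      have s1 : ¬(Edg.uv i p ∉ T₁ ∧ Edg.vw i p ∉ T₁ ∧ Edg.uw i p ∉ T₁) := by
        rintro ⟨h1, h2, h3⟩
        exact no_triangle hS2 ((hcompl _).mpr h1) ((hcompl _).mpr h2)
          ((hcompl _).mpr h3) (by simp) (by simp) rfl rfl rfl
      have s2 : ¬(Edg.uv i p ∉ T₁ ∧ Edg.vz i p ∉ T₁ ∧ Edg.uz i p ∉ T₁) := by
        rintro ⟨h1, h2, h3⟩
        exact no_triangle hS2 ((hcompl _).mpr h1) ((hcompl _).mpr h2)
          ((hcompl _).mpr h3) (by simp) (by simp) rfl rfl rfl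
      have s3 : ¬(Edg.uw i p ∉ T₁ ∧ Edg.wz i p ∉ T₁ ∧ Edg.uz i p ∉ T₁) := by
        rintro ⟨h1, h2, h3⟩
        exact no_triangle hS2 ((hcompl _).mpr h1) ((hcompl _).mpr h2)
          ((hcompl _).mpr h3) (by simp) (by simp) rfl rfl rfl
      have s4 : ¬(Edg.vw i p ∉ T₁ ∧ Edg.wz i p ∉ T₁ ∧ Edg.vz i p ∉ T₁) := by
        rintro ⟨h1, h2, h3⟩
        exact no_triangle hS2 ((hcompl _).mpr h1) ((hcompl _).mpr h2)
          ((hcompl _).mpr h3) (by simp) (by simp) rfl rfl rfl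
      exact keyProp pcc t1 t2 t3 t4 s1 s2 s3 s4
    have pcb : ∀ (i : Fin n) (p : Fin 4),
        Edg.vz i p ∈ T₁ ↔ Edg.uv i (p + 1) ∉ T₁ := by
      intro i p
      refine pair _ _ (by simp) ?_
      show Col.cb i p = Col.cb i (p + 1 - 1)
      rw [add_sub_cancel_right]
    have chain : ∀ (i : Fin n) (p : Fin 4),
        Edg.vz i (p + 1) ∈ T₁ ↔ Edg.vz i p ∈ T₁ :=
      fun i p => ((key i (p + 1)).2.trans (pcb i p).symm)
    have vz_const : ∀ (i : Fin n) (p : Fin 4),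
        Edg.vz i p ∈ T₁ ↔ Edg.vz i 0 ∈ T₁ := by
      intro i p
      have c0 : Edg.vz i 1 ∈ T₁ ↔ Edg.vz i 0 ∈ T₁ := chain i 0
      have c1 : Edg.vz i 2 ∈ T₁ ↔ Edg.vz i 0 ∈ T₁ := (chain i 1).trans c0
      have c2 : Edg.vz i 3 ∈ T₁ ↔ Edg.vz i 0 ∈ T₁ := (chain i 2).trans c1
      fin_cases p
      · exact Iff.rfl
      · exact c0
      · exact c1
      · exact c2
    have uw_const : ∀ (i : Fin n) (p : Fin 4),
        Edg.uw i p ∈ T₁ ↔ Edg.uw i 0 ∈ T₁ :=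
      fun i p => (key i p).1.trans ((vz_const i p).trans (key i 0).1.symm)
    have pcd : ∀ (j : Fin m) (q : Fin 3),
        Edg.uw (Φ.occ (j, q)).1 (Φ.occ (j, q)).2 ∈ T₁ ↔ Edg.tri j q ∉ T₁ :=
      fun j q => pair _ _ (by simp) rfl
    have triT1 : ∀ j : Fin m,
        ¬(Edg.tri j 0 ∈ T₁ ∧ Edg.tri j 1 ∈ T₁ ∧ Edg.tri j 2 ∈ T₁) := by
      rintro j ⟨h1, h2, h3⟩
      exact no_triangle hS1 h1 h2 h3 (by simp) (by simp) rfl rfl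
        (show s(Vtx.c j 2, Vtx.c j 0) = s(Vtx.c j 0, Vtx.c j 2) from Sym2.eq_swap)
    have triT2 : ∀ j : Fin m,
        ¬(Edg.tri j 0 ∉ T₁ ∧ Edg.tri j 1 ∉ T₁ ∧ Edg.tri j 2 ∉ T₁) := by
      rintro j ⟨h1, h2, h3⟩
      exact no_triangle hS2 ((hcompl _).mpr h1) ((hcompl _).mpr h2)
        ((hcompl _).mpr h3) (by simp) (by simp) rfl rfl
        (show s(Vtx.c j 2, Vtx.c j 0) = s(Vtx.c j 0, Vtx.c j 2) from Sym2.eq_swap)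
    refine ⟨fun i => decide (Edg.uw i 0 ∈ T₁), fun j => ⟨?_, ?_⟩⟩
    · have h := triT1 j
      have hd : Edg.tri j 0 ∉ T₁ ∨ Edg.tri j 1 ∉ T₁ ∨ Edg.tri j 2 ∉ T₁ := by
        by_contra hc
        push_neg at hc
        exact h ⟨hc.1, hc.2.1, hc.2.2⟩
      rcases hd with h' | h' | h'
      · exact ⟨0, decide_eq_true ((uw_const _ _).mp ((pcd j 0).mpr h'))⟩
      · exact ⟨1, decide_eq_true ((uw_const _ _).mp ((pcd j 1).mpr h'))⟩
      · exact ⟨2, decide_eq_true ((uw_const _ _).mp ((pcd j 2).mpr h'))⟩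
    · have h := triT2 j
      have hd : Edg.tri j 0 ∈ T₁ ∨ Edg.tri j 1 ∈ T₁ ∨ Edg.tri j 2 ∈ T₁ := by
        by_contra hc
        push_neg at hc
        exact h ⟨hc.1, hc.2.1, hc.2.2⟩
      rcases hd with h' | h' | h'
      · refine ⟨0, decide_eq_false fun hu => ?_⟩
        exact (pcd j 0).mp ((uw_const _ _).mpr hu) h'
      · refine ⟨1, decide_eq_false fun hu => ?_⟩
        exact (pcd j 1).mp ((uw_const _ _).mpr hu) h'
      · refine ⟨2, decide_eq_false fun hu => ?_⟩
        exact (pcd j 2).mp ((uw_const _ _).mpr hu) h'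


end PackingRainbowStmt0
end

section
/- Let G=(V,E) be an edge-colored graph whose edge set is the disjoint union of two spanning trees, in which each color class contains exactly two edges, and let D=(U,A) be the digraph constructed from G. Then the edge set of G can be partitioned into two rainbow spanning trees if and only if A can be partitioned into two weakly connected spanning subgraphs such that every vertex u∈U−r has positive in-degree in both of them. -/
namespace DigraphStmt6

/-- An edge of the multigraph connects via set `F`. -/
def Step {V E : Type*} (ends : E → Sym2 V) (F : Set E) (a b : V) : Prop :=
  ∃ e ∈ F, ends e = s(a, b)

/-- The edge set `F` connects the whole multigraph with endpoint map `ends`. -/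
def Connects {V E : Type*} (ends : E → Sym2 V) (F : Set E) : Prop :=
  ∀ a b : V, Relation.ReflTransGen (Step ends F) a b

/-- `F` is a spanning tree: it connects all vertices, minimally so. -/
def IsSpanningTree {V E : Type*} (ends : E → Sym2 V) (F : Set E) : Prop :=
  Connects ends F ∧ ∀ e ∈ F, ¬ Connects ends (F \ {e})

/-- `F` is rainbow: each color class contains at most one edge of `F`. -/
def Rainbow {E C : Type*} (color : E → C) (F : Set E) : Prop :=
  ∀ e ∈ F, ∀ f ∈ F, color e = color f → e = f

/-- The vertex set `U` of the digraph `D`: for every `v ∈ V - r` the vertices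
`v^in_1, v^in_2, v^out`; a copy of `r` (`root`); and a vertex `w c` for each color `c`. -/
inductive UVtx (V C : Type*) (r : V) where
  | vin (v : {x : V // x ≠ r}) (i : Fin 2)
  | vout (v : {x : V // x ≠ r})
  | root
  | w (c : C)

/-- The arc set `A` of the digraph `D`: for every `v ∈ V - r` and `i ∈ [2]` two parallel
arcs (`par v i b`, `b ∈ [2]`) from `v^in_i` to `v^out`; for every edge `e` of `G` its image
arc `img e`; for every edge `e` of `G` an arc `wout e` leaving `w (color e)`; and two
loops `loop c b` at each `w c`. -/
inductive UArc (V E C : Type*) (r : V) where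
  | par (v : {x : V // x ≠ r}) (i : Fin 2) (b : Fin 2)
  | img (e : E)
  | wout (e : E)
  | loop (c : C) (b : Fin 2)

variable {V E C : Type*} [DecidableEq V]

/-- The vertex `x^in_i` of `D`, where `x` is replaced by `root` if `x = r`. -/
def toIn {C : Type*} (r : V) (x : V) (i : Fin 2) : UVtx V C r :=
  if h : x = r then UVtx.root else UVtx.vin ⟨x, h⟩ i

/-- The vertex `x^out` of `D`, where `x^out` is replaced by `root` if `x = r`. -/
def toOut {C : Type*} (r : V) (x : V) : UVtx V C r :=
  if h : x = r then UVtx.root else UVtx.vout ⟨x, h⟩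

/-- The tail of an arc of `D`.  Here `o e = (tail, head)` is the orientation of the edge
`e` of `G` and `slot e ∈ [2]` tells whether the image of `e` enters `(head)^in_1` or
`(head)^in_2`. -/
def arcTail {r : V} (color : E → C) (o : E → V × V) (slot : E → Fin 2) :
    UArc V E C r → UVtx V C r
  | .par v i _ => UVtx.vin v i
  | .img e => toOut r (o e).1
  | .wout e => UVtx.w (color e)
  | .loop c _ => UVtx.w c

/-- The head of an arc of `D`. -/
def arcHead {r : V} (color : E → C) (o : E → V × V) (slot : E → Fin 2) :
    UArc V E C r → UVtx V C r
  | .par v _ _ => UVtx.vout v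
  | .img e => toIn r (o e).2 (slot e)
  | .wout e => toIn r (o e).2 (slot e)
  | .loop c _ => UVtx.w c

/-- The endpoints of an arc of `D`, forgetting its direction. -/
def uEnds {r : V} (color : E → C) (o : E → V × V) (slot : E → Fin 2)
    (a : UArc V E C r) : Sym2 (UVtx V C r) :=
  s(arcTail color o slot a, arcHead color o slot a)

section Counting

variable {V E : Type*}

lemma step_symm {ends : E → Sym2 V} {F : Set E} {a b : V} (h : Step ends F a b) :
    Step ends F b a := by
  obtain ⟨e, he, h⟩ := h
  exact ⟨e, he, h.trans (Sym2.eq_swap)⟩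

lemma rtg_symm {ends : E → Sym2 V} {F : Set E} {a b : V}
    (h : Relation.ReflTransGen (Step ends F) a b) :
    Relation.ReflTransGen (Step ends F) b a :=
  haveI : Std.Symm (Step ends F) := ⟨fun _ _ => step_symm⟩
  (Relation.ReflTransGen.symmetric (r := Step ends F)).symm _ _ h

def ReachN (R : V → V → Prop) : ℕ → V → V → Prop
  | 0, a, b => a = b
  | n+1, a, c => ∃ b, ReachN R n a b ∧ R b c

lemma reflTransGen_iff_reachN {R : V → V → Prop} {a b : V} :
    Relation.ReflTransGen R a b ↔ ∃ n, ReachN R n a b := by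
  constructor
  · intro h
    induction h with
    | refl => exact ⟨0, rfl⟩
    | tail _ hbc ih => obtain ⟨n, hn⟩ := ih; exact ⟨n+1, _, hn, hbc⟩
  · rintro ⟨n, hn⟩
    induction n generalizing b with
    | zero => cases hn; rfl
    | succ n ih => obtain ⟨c, hc, hR⟩ := hn; exact (ih hc).tail hR

set_option linter.unusedSectionVars false

variable [Fintype V] [Fintype E] (ends : E → Sym2 V)

/-- Core construction: shortest-path edges from a basepoint. -/
lemma key_edges {F : Set E} (hC : Connects ends F) (a : V) :
    ∃ (g : {v : V // v ≠ a} → E),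
      (∀ v, g v ∈ F) ∧ Function.Injective g ∧
      (∀ f₀ ∈ F, (∀ v, g v ≠ f₀) → Connects ends (F \ {f₀})) := by
  classical
  have hex : ∀ v : V, ∃ n, ReachN (Step ends F) n a v :=
    fun v => reflTransGen_iff_reachN.1 (hC a v)
  set d : V → ℕ := fun v => Nat.find (hex v) with hd
  have hspec : ∀ v, ReachN (Step ends F) (d v) a v := fun v => Nat.find_spec (hex v)
  have key : ∀ v : V, v ≠ a → ∃ e ∈ F, ∃ u, ends e = s(u, v) ∧ d u < d v := by
    intro v hv
    have hdv : d v ≠ 0 := by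
      intro h0
      have h1 := hspec v
      rw [h0] at h1
      exact hv h1.symm
    obtain ⟨m, hm⟩ := Nat.exists_eq_succ_of_ne_zero hdv
    have h1 := hspec v
    rw [hm] at h1
    obtain ⟨u, hu, e, he, hends⟩ := h1
    exact ⟨e, he, u, hends, by
      have : d u ≤ m := Nat.find_min' (hex u) hu
      omega⟩
  choose e he u hu hlt using key
  refine ⟨fun v => e v.1 v.2, fun v => he v.1 v.2, ?_, ?_⟩
  · rintro ⟨v, hv⟩ ⟨w, hw⟩ hvw
    simp only at hvw
    ext
    have h1 := hu v hv
    have h2 := hu w hw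
    rw [hvw] at h1
    rw [h1] at h2
    rcases Sym2.eq_iff.1 h2 with ⟨hx, hy⟩ | ⟨hx, hy⟩
    · exact hy
    · exfalso
      have l1 := hlt v hv
      have l2 := hlt w hw
      rw [hx] at l1
      rw [← hy] at l2
      omega
  · intro f₀ hf₀ hne
    have reach : ∀ n, ∀ v : V, d v ≤ n → Relation.ReflTransGen (Step ends (F \ {f₀})) a v := by
      intro n
      induction n with
      | zero =>
        intro v hv
        have h0 : d v = 0 := Nat.le_zero.1 hv
        have h1 := hspec v
        rw [h0] at h1
        exact h1 ▸ Relation.ReflTransGen.refl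
      | succ n ih =>
        intro v hv
        by_cases hva : v = a
        · exact hva ▸ Relation.ReflTransGen.refl
        · have hef : e v hva ≠ f₀ := hne ⟨v, hva⟩
          have : d (u v hva) ≤ n := by have := hlt v hva; omega
          exact (ih _ this).tail ⟨e v hva, ⟨he v hva, hef⟩, hu v hva⟩
    intro x y
    have hx := reach (d x) x le_rfl
    have hy := reach (d y) y le_rfl
    exact (rtg_symm hx).trans hy

lemma connects_le_ncard {F : Set E} (hC : Connects ends F) (a : V) :
    Fintype.card V ≤ F.ncard + 1 := by
  classical
  obtain ⟨g, hgF, hginj, -⟩ := key_edges ends hC a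
  have hinj : Function.Injective (fun v : {v : V // v ≠ a} => (⟨g v, hgF v⟩ : F)) := by
    intro v w hvw
    exact hginj (congrArg Subtype.val hvw)
  have h1 : Nat.card {v : V // v ≠ a} ≤ Nat.card F :=
    Nat.card_le_card_of_injective _ hinj
  rw [Nat.card_eq_fintype_card, Nat.card_coe_set_eq] at h1
  have h2 : Fintype.card {v : V // v ≠ a} = Fintype.card V - 1 := by
    simp [Fintype.card_subtype_compl]
  have h3 : 0 < Fintype.card V := Fintype.card_pos_iff.2 ⟨a⟩
  omega

lemma spanningTree_ncard {F : Set E} (hT : IsSpanningTree ends F) (a : V) :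
    F.ncard + 1 = Fintype.card V := by
  classical
  obtain ⟨g, hgF, hginj, hmin⟩ := key_edges ends hT.1 a
  have hsurj : ∀ f₀ ∈ F, ∃ v, g v = f₀ := by
    intro f₀ hf₀
    by_contra hcon
    push_neg at hcon
    exact hT.2 f₀ hf₀ (hmin f₀ hf₀ hcon)
  have hs : Function.Surjective (fun v : {v : V // v ≠ a} => (⟨g v, hgF v⟩ : F)) := by
    rintro ⟨f₀, hf₀⟩
    obtain ⟨v, hv⟩ := hsurj f₀ hf₀
    exact ⟨v, Subtype.ext hv⟩
  have h1 : Nat.card F ≤ Nat.card {v : V // v ≠ a} :=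
    Nat.card_le_card_of_surjective _ hs
  rw [Nat.card_coe_set_eq, Nat.card_eq_fintype_card] at h1
  have h2 : Fintype.card {v : V // v ≠ a} = Fintype.card V - 1 := by
    simp [Fintype.card_subtype_compl]
  have h3 : 0 < Fintype.card V := Fintype.card_pos_iff.2 ⟨a⟩
  have h4 := connects_le_ncard ends hT.1 a
  omega

end Counting

section Digraph

set_option linter.unusedSectionVars false
set_option linter.unusedVariables false

variable {V E C : Type*} [DecidableEq V] {r : V}
variable (ends : E → Sym2 V) (color : E → C) (o : E → V × V) (slot : E → Fin 2)

lemma fin2_ne {x y z : Fin 2} (h1 : x ≠ z) (h2 : y ≠ z) : x = y := by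
  have hx := x.isLt; have hy := y.isLt; have hz := z.isLt
  have h1' : x.val ≠ z.val := fun h => h1 (Fin.ext h)
  have h2' : y.val ≠ z.val := fun h => h2 (Fin.ext h)
  exact Fin.ext (by omega)

lemma fin2_or (b : Fin 2) : b = 0 ∨ b = 1 := by
  by_cases h : b = 0
  · exact Or.inl h
  · exact Or.inr (fin2_ne h (by decide))

lemma edge_at (hv : ∀ v : V, v ≠ r → {e : E | (o e).2 = v}.ncard = 2)
    (hslot : ∀ e f : E, (o e).2 = (o f).2 → slot e = slot f → e = f)
    {v : V} (hvr : v ≠ r) (i : Fin 2) : ∃ e : E, (o e).2 = v ∧ slot e = i := by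
  obtain ⟨e₁, e₂, hne, hset⟩ := Set.ncard_eq_two.1 (hv v hvr)
  have h1 : (o e₁).2 = v := by
    have : e₁ ∈ {e : E | (o e).2 = v} := by rw [hset]; simp
    exact this
  have h2 : (o e₂).2 = v := by
    have : e₂ ∈ {e : E | (o e).2 = v} := by rw [hset]; simp
    exact this
  by_cases hi : slot e₁ = i
  · exact ⟨e₁, h1, hi⟩
  · by_cases hi2 : slot e₂ = i
    · exact ⟨e₂, h2, hi2⟩
    · exact absurd (hslot e₁ e₂ (h1.trans h2.symm) (fin2_ne hi hi2)) hne

lemma class_pair (hcol : ∀ c : C, {e : E | color e = c}.ncard = 2) (c : C) :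
    ∃ e f : E, e ≠ f ∧ color e = c ∧ color f = c ∧ ∀ g, color g = c → g = e ∨ g = f := by
  obtain ⟨e, f, hne, hset⟩ := Set.ncard_eq_two.1 (hcol c)
  have he : color e = c := by
    have : e ∈ {x : E | color x = c} := by rw [hset]; simp
    exact this
  have hf : color f = c := by
    have : f ∈ {x : E | color x = c} := by rw [hset]; simp
    exact this
  refine ⟨e, f, hne, he, hf, fun g hg => ?_⟩
  have : g ∈ ({e, f} : Set E) := by rw [← hset]; exact hg
  simpa using this

lemma head_vin_elim {a : UArc V E C r} {v : {x : V // x ≠ r}} {i : Fin 2}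
    (h : arcHead color o slot a = UVtx.vin v i) :
    ∃ f : E, (a = .img f ∨ a = .wout f) ∧ (o f).2 = v.1 ∧ slot f = i := by
  cases a with
  | par v' i' b => simp [arcHead] at h
  | img f =>
    refine ⟨f, Or.inl rfl, ?_⟩
    by_cases hf : (o f).2 = r
    · have : arcHead color o slot (UArc.img f : UArc V E C r) = UVtx.root := by
        show toIn r (o f).2 (slot f) = _
        rw [toIn, dif_pos hf]
      rw [this] at h
      exact absurd h (by simp)
    · have : arcHead color o slot (UArc.img f : UArc V E C r) = UVtx.vin ⟨(o f).2, hf⟩ (slot f) := by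
        show toIn r (o f).2 (slot f) = _
        rw [toIn, dif_neg hf]
      rw [this] at h
      injection h with h1 h2
      exact ⟨congrArg Subtype.val h1, h2⟩
  | wout f =>
    refine ⟨f, Or.inr rfl, ?_⟩
    by_cases hf : (o f).2 = r
    · have : arcHead color o slot (UArc.wout f : UArc V E C r) = UVtx.root := by
        show toIn r (o f).2 (slot f) = _
        rw [toIn, dif_pos hf]
      rw [this] at h
      exact absurd h (by simp)
    · have : arcHead color o slot (UArc.wout f : UArc V E C r) = UVtx.vin ⟨(o f).2, hf⟩ (slot f) := by
        show toIn r (o f).2 (slot f) = _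
        rw [toIn, dif_neg hf]
      rw [this] at h
      injection h with h1 h2
      exact ⟨congrArg Subtype.val h1, h2⟩
  | loop c b => simp [arcHead] at h

lemma img_iff_wout {F₁ F₂ : Set (UArc V E C r)}
    (hF : F₁ ∪ F₂ = Set.univ) (hd : Disjoint F₁ F₂)
    (hr' : ∀ e : E, (o e).2 ≠ r)
    (hslot : ∀ e f : E, (o e).2 = (o f).2 → slot e = slot f → e = f)
    (hin₁ : ∀ u : UVtx V C r, u ≠ UVtx.root → ∃ a ∈ F₁, arcHead color o slot a = u)
    (hin₂ : ∀ u : UVtx V C r, u ≠ UVtx.root → ∃ a ∈ F₂, arcHead color o slot a = u)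
    (e : E) : (UArc.img e : UArc V E C r) ∈ F₁ ↔ (UArc.wout e : UArc V E C r) ∈ F₂ := by
  have helim : ∀ a : UArc V E C r,
      arcHead color o slot a = UVtx.vin ⟨(o e).2, hr' e⟩ (slot e) →
      a = UArc.img e ∨ a = UArc.wout e := by
    intro a ha
    obtain ⟨f, hor, h2, h3⟩ := head_vin_elim color o slot ha
    have : f = e := hslot f e h2 h3
    rw [this] at hor
    exact hor
  constructor
  · intro h1
    obtain ⟨a, ha2, hhead⟩ := hin₂ (UVtx.vin ⟨(o e).2, hr' e⟩ (slot e)) (by simp)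
    rcases helim a hhead with rfl | rfl
    · exact absurd ha2 (Set.disjoint_left.1 hd h1)
    · exact ha2
  · intro h2
    have hu : (UArc.img e : UArc V E C r) ∈ F₁ ∪ F₂ := hF ▸ Set.mem_univ _
    rcases hu with h | h
    · exact h
    · exfalso
      obtain ⟨a, ha1, hhead⟩ := hin₁ (UVtx.vin ⟨(o e).2, hr' e⟩ (slot e)) (by simp)
      rcases helim a hhead with rfl | rfl
      · exact Set.disjoint_left.1 hd ha1 h
      · exact Set.disjoint_left.1 hd ha1 h2

end Digraph

section Reverse

set_option linter.unusedSectionVars false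
set_option linter.unusedVariables false

variable {V E C : Type*} [DecidableEq V] {r : V}
variable (ends : E → Sym2 V) (color : E → C) (o : E → V × V) (slot : E → Fin 2)

lemma rainbow_rev {F₁ F₂ : Set (UArc V E C r)}
    (hF : F₁ ∪ F₂ = Set.univ) (hd : Disjoint F₁ F₂)
    (hr' : ∀ e : E, (o e).2 ≠ r)
    (hslot : ∀ e f : E, (o e).2 = (o f).2 → slot e = slot f → e = f)
    (hcol : ∀ c : C, {e : E | color e = c}.ncard = 2)
    (hc₁ : Connects (uEnds color o slot) F₁)
    (hin₁ : ∀ u : UVtx V C r, u ≠ UVtx.root → ∃ a ∈ F₁, arcHead color o slot a = u)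
    (hin₂ : ∀ u : UVtx V C r, u ≠ UVtx.root → ∃ a ∈ F₂, arcHead color o slot a = u) :
    Rainbow color {e : E | (UArc.img e : UArc V E C r) ∈ F₁} := by
  intro e he f hf hcf
  by_contra hne
  obtain ⟨e', f', hne', he', hf', hall⟩ := class_pair color hcol (color e)
  have hee := hall e rfl
  have hff := hall f hcf.symm
  have hgF : ∀ g : E, color g = color e → (UArc.img g : UArc V E C r) ∈ F₁ := by
    intro g hg
    rcases hall g hg with rfl | rfl
    · rcases hee with rfl | rfl
      · exact he
      · rcases hff with rfl | rfl
        · exact hf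
        · exact absurd rfl hne
    · rcases hee with rfl | rfl
      · rcases hff with rfl | rfl
        · exact absurd rfl hne
        · exact hf
      · exact he
  have reach : ∀ x, Relation.ReflTransGen (Step (uEnds color o slot) F₁) (UVtx.w (color e)) x →
      x = UVtx.w (color e) := by
    intro x hx
    induction hx with
    | refl => rfl
    | tail hab hbc ih =>
      rcases hbc with ⟨a, ha, hends⟩
      rw [ih] at hends
      have hin_ne_w : ∀ (z : V) (j : Fin 2), toIn (C := C) r z j ≠ UVtx.w (color e) := by
        intro z j h
        rw [toIn] at h
        split at h <;> simp at h
      have hout_ne_w : ∀ z : V, toOut (C := C) r z ≠ UVtx.w (color e) := by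
        intro z h
        rw [toOut] at h
        split at h <;> simp at h
      cases a with
      | par v' i' b' =>
        exfalso
        rcases Sym2.eq_iff.1 hends with ⟨hA, hB⟩ | ⟨hA, hB⟩ <;> simp [arcTail, arcHead] at hA hB
      | img g =>
        exfalso
        rcases Sym2.eq_iff.1 hends with ⟨hA, hB⟩ | ⟨hA, hB⟩
        · exact hout_ne_w _ hA
        · exact hin_ne_w _ _ hB
      | wout g =>
        exfalso
        rcases Sym2.eq_iff.1 hends with ⟨hA, hB⟩ | ⟨hA, hB⟩
        · have hcg : color g = color e := by
            have hA' : UVtx.w (color g) = UVtx.w (color e) := hA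
            injection hA'
          have h1 : (UArc.img g : UArc V E C r) ∈ F₁ := hgF g hcg
          have h2 : (UArc.wout g : UArc V E C r) ∈ F₂ :=
            (img_iff_wout color o slot hF hd hr' hslot hin₁ hin₂ g).1 h1
          exact Set.disjoint_left.1 hd ha h2
        · exact hin_ne_w _ _ hB
      | loop c' b' =>
        rcases Sym2.eq_iff.1 hends with ⟨hA, hB⟩ | ⟨hA, hB⟩
        · rw [← hB]; exact hA
        · rw [← hA]; exact hB
  have hroot := reach UVtx.root (hc₁ (UVtx.w (color e)) UVtx.root)
  simp at hroot

lemma connects_rev {F₁ F₂ : Set (UArc V E C r)}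
    (ho : ∀ e : E, s((o e).1, (o e).2) = ends e)
    (hF : F₁ ∪ F₂ = Set.univ) (hd : Disjoint F₁ F₂)
    (hr' : ∀ e : E, (o e).2 ≠ r)
    (hslot : ∀ e f : E, (o e).2 = (o f).2 → slot e = slot f → e = f)
    (hcol : ∀ c : C, {e : E | color e = c}.ncard = 2)
    (hc₁ : Connects (uEnds color o slot) F₁)
    (hin₁ : ∀ u : UVtx V C r, u ≠ UVtx.root → ∃ a ∈ F₁, arcHead color o slot a = u)
    (hin₂ : ∀ u : UVtx V C r, u ≠ UVtx.root → ∃ a ∈ F₂, arcHead color o slot a = u)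
    (rb₁ : Rainbow color {e : E | (UArc.img e : UArc V E C r) ∈ F₁})
    (rb₂ : Rainbow color {e : E | (UArc.img e : UArc V E C r) ∈ F₂}) :
    Connects ends {e : E | (UArc.img e : UArc V E C r) ∈ F₁} := by
  classical
  set S₁ : Set E := {e : E | (UArc.img e : UArc V E C r) ∈ F₁} with hS₁
  have hiw : ∀ g : E, (UArc.img g : UArc V E C r) ∈ F₁ ↔ (UArc.wout g : UArc V E C r) ∈ F₂ :=
    img_iff_wout color o slot hF hd hr' hslot hin₁ hin₂
  have hiw' : ∀ g : E, (UArc.img g : UArc V E C r) ∈ F₂ ↔ (UArc.wout g : UArc V E C r) ∈ F₁ :=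
    img_iff_wout color o slot (by rw [Set.union_comm]; exact hF) hd.symm hr' hslot hin₂ hin₁
  have hchoice : ∀ c : C, ∃ g : E, color g = c ∧ (UArc.wout g : UArc V E C r) ∈ F₁ := by
    intro c
    obtain ⟨e, f, hne, he, hf, hall⟩ := class_pair color hcol c
    by_cases h1 : (UArc.img e : UArc V E C r) ∈ F₂
    · exact ⟨e, he, (hiw' e).1 h1⟩
    · have h1' : (UArc.img e : UArc V E C r) ∈ F₁ := by
        have := hF ▸ Set.mem_univ (UArc.img e : UArc V E C r)
        rcases this with h | h
        · exact h
        · exact absurd h h1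
      by_cases h2 : (UArc.img f : UArc V E C r) ∈ F₂
      · exact ⟨f, hf, (hiw' f).1 h2⟩
      · have h2' : (UArc.img f : UArc V E C r) ∈ F₁ := by
          have := hF ▸ Set.mem_univ (UArc.img f : UArc V E C r)
          rcases this with h | h
          · exact h
          · exact absurd h h2
        exact absurd (rb₁ e h1' f h2' (he.trans hf.symm)) hne
  choose gc hgc1 hgc2 using hchoice
  set π : UVtx V C r → V := fun x => match x with
    | .vin v _ => v.1
    | .vout v => v.1
    | .root => r
    | .w c => (o (gc c)).2
    with hπ
  have hπout : ∀ x : V, π (toOut (C := C) r x) = x := by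
    intro x
    by_cases h : x = r
    · rw [toOut, dif_pos h, h]
    · rw [toOut, dif_neg h]
  have hπin : ∀ (x : V) (i : Fin 2), π (toIn (C := C) r x i) = x := by
    intro x i
    by_cases h : x = r
    · rw [toIn, dif_pos h, h]
    · rw [toIn, dif_neg h]
  have liftstep : ∀ x y, Step (uEnds color o slot) F₁ x y →
      Relation.ReflTransGen (Step ends S₁) (π x) (π y) := by
    rintro x y ⟨a, ha, hends⟩
    have main : Relation.ReflTransGen (Step ends S₁)
        (π (arcTail color o slot a)) (π (arcHead color o slot a)) := by
      cases a with
      | par v i b => exact Relation.ReflTransGen.refl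
      | img g =>
        show Relation.ReflTransGen (Step ends S₁)
          (π (toOut (C := C) r (o g).1)) (π (toIn (C := C) r (o g).2 (slot g)))
        rw [hπout, hπin]
        exact Relation.ReflTransGen.single ⟨g, ha, (ho g).symm⟩
      | wout g =>
        have h2 : (UArc.img g : UArc V E C r) ∈ F₂ := (hiw' g).2 ha
        have h1 : (UArc.img (gc (color g)) : UArc V E C r) ∈ F₂ := (hiw' _).2 (hgc2 _)
        have hgg : gc (color g) = g := rb₂ _ h1 _ h2 (hgc1 _)
        show Relation.ReflTransGen (Step ends S₁)
          (π (UVtx.w (color g))) (π (toIn (C := C) r (o g).2 (slot g)))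
        rw [hπin]
        have : π (UVtx.w (color g)) = (o g).2 := by
          show (o (gc (color g))).2 = (o g).2
          rw [hgg]
        rw [this]
      | loop c b => exact Relation.ReflTransGen.refl
    have h2 : s(arcTail color o slot a, arcHead color o slot a) = s(x, y) := hends
    rcases Sym2.eq_iff.1 h2 with ⟨hA, hB⟩ | ⟨hA, hB⟩
    · rw [← hA, ← hB]; exact main
    · rw [← hA, ← hB]; exact rtg_symm main
  intro x y
  have h := hc₁ (toOut (C := C) r x) (toOut (C := C) r y)
  have lift : ∀ u w : UVtx V C r, Relation.ReflTransGen (Step (uEnds color o slot) F₁) u w →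
      Relation.ReflTransGen (Step ends S₁) (π u) (π w) := by
    intro u w huw
    induction huw with
    | refl => exact Relation.ReflTransGen.refl
    | tail hab hbc ih => exact ih.trans (liftstep _ _ hbc)
  have := lift _ _ h
  rwa [hπout, hπout] at this

end Reverse

section Forward

set_option linter.unusedSectionVars false
set_option linter.unusedVariables false

variable {V E C : Type*} [DecidableEq V] {r : V}

/-- One side of the arc partition built from an edge partition `(S, A)`:
images of `S`-edges, `w`-arcs of `A`-edges, and the `b₀`-labelled parallel arcs and loops. -/
def Fside (r : V) (S A : Set E) (b₀ : Fin 2) : Set (UArc V E C r) := fun a =>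
  match a with
  | .par _ _ b => b = b₀
  | .img e => e ∈ S
  | .wout e => e ∈ A
  | .loop _ b => b = b₀

variable (ends : E → Sym2 V) (color : E → C) (o : E → V × V) (slot : E → Fin 2)

lemma connects_Fside
    (ho : ∀ e : E, s((o e).1, (o e).2) = ends e)
    (hr' : ∀ e : E, (o e).2 ≠ r)
    {S A : Set E} (b₀ : Fin 2) (hS : Connects ends S)
    (hA : ∀ c : C, ∃ e, color e = c ∧ e ∈ A) :
    Connects (uEnds color o slot) (Fside (C := C) r S A b₀) := by
  set F : Set (UArc V E C r) := Fside (C := C) r S A b₀ with hFdef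
  have hpar : ∀ (v : {x : V // x ≠ r}) (i : Fin 2),
      Step (uEnds color o slot) F (UVtx.vin v i) (UVtx.vout v) := by
    intro v i
    exact ⟨.par v i b₀, rfl, rfl⟩
  have hout : ∀ e ∈ S, Relation.ReflTransGen (Step (uEnds color o slot) F)
      (toOut (C := C) r (o e).1) (toOut (C := C) r (o e).2) := by
    intro e he
    have s1 : Step (uEnds color o slot) F (toOut (C := C) r (o e).1)
        (toIn (C := C) r (o e).2 (slot e)) := ⟨.img e, he, rfl⟩
    have heq : toIn (C := C) r (o e).2 (slot e) = UVtx.vin ⟨(o e).2, hr' e⟩ (slot e) := by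
      rw [toIn, dif_neg (hr' e)]
    have heq2 : toOut (C := C) r (o e).2 = UVtx.vout ⟨(o e).2, hr' e⟩ := by
      rw [toOut, dif_neg (hr' e)]
    refine (Relation.ReflTransGen.single s1).tail ?_
    rw [heq, heq2]
    exact hpar _ _
  have lift : ∀ x y : V, Step ends S x y →
      Relation.ReflTransGen (Step (uEnds color o slot) F)
        (toOut (C := C) r x) (toOut (C := C) r y) := by
    rintro x y ⟨e, he, hends⟩
    have h2 : s((o e).1, (o e).2) = s(x, y) := (ho e).trans hends
    rcases Sym2.eq_iff.1 h2 with ⟨hA', hB'⟩ | ⟨hA', hB'⟩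
    · rw [← hA', ← hB']; exact hout e he
    · rw [← hA', ← hB']; exact rtg_symm (hout e he)
  have lift2 : ∀ x y : V, Relation.ReflTransGen (Step (uEnds color o slot) F)
      (toOut (C := C) r x) (toOut (C := C) r y) := by
    intro x y
    have h := hS x y
    induction h with
    | refl => exact Relation.ReflTransGen.refl
    | tail hab hbc ih => exact ih.trans (lift _ _ hbc)
  have routv : ∀ v : {x : V // x ≠ r}, Relation.ReflTransGen (Step (uEnds color o slot) F)
      (UVtx.vout v) UVtx.root := by
    rintro ⟨v, hv⟩
    have h1 : toOut (C := C) r v = UVtx.vout ⟨v, hv⟩ := by rw [toOut, dif_neg hv]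
    have h2 : toOut (C := C) r r = UVtx.root := by rw [toOut, dif_pos rfl]
    have := lift2 v r
    rwa [h1, h2] at this
  have toRoot : ∀ u : UVtx V C r,
      Relation.ReflTransGen (Step (uEnds color o slot) F) u UVtx.root := by
    intro u
    cases u with
    | vin v i => exact (Relation.ReflTransGen.single (hpar v i)).trans (routv v)
    | vout v => exact routv v
    | root => exact Relation.ReflTransGen.refl
    | w c =>
      obtain ⟨e, hce, heA⟩ := hA c
      have s1 : Step (uEnds color o slot) F (UVtx.w c) (toIn (C := C) r (o e).2 (slot e)) := by
        refine ⟨.wout e, heA, ?_⟩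
        show s(UVtx.w (color e), toIn (C := C) r (o e).2 (slot e)) = _
        rw [hce]
      have heq : toIn (C := C) r (o e).2 (slot e) = UVtx.vin ⟨(o e).2, hr' e⟩ (slot e) := by
        rw [toIn, dif_neg (hr' e)]
      rw [heq] at s1
      exact ((Relation.ReflTransGen.single s1).tail (hpar _ _)).trans (routv _)
  intro x y
  exact (toRoot x).trans (rtg_symm (toRoot y))

lemma indeg_Fside
    (hr' : ∀ e : E, (o e).2 ≠ r)
    (hv : ∀ v : V, v ≠ r → {e : E | (o e).2 = v}.ncard = 2)
    (hslot : ∀ e f : E, (o e).2 = (o f).2 → slot e = slot f → e = f)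
    {S A : Set E} (hSA : S ∪ A = Set.univ) (b₀ : Fin 2) :
    ∀ u : UVtx V C r, u ≠ UVtx.root →
      ∃ a ∈ Fside (C := C) r S A b₀, arcHead color o slot a = u := by
  intro u hu
  cases u with
  | vin v i =>
    obtain ⟨v, hvr⟩ := v
    obtain ⟨e, he2, hslot_e⟩ := edge_at o slot hv hslot hvr i
    have hhead : arcHead color o slot (UArc.img e : UArc V E C r) = UVtx.vin ⟨v, hvr⟩ i := by
      show toIn r (o e).2 (slot e) = _
      rw [hslot_e]
      rw [toIn]
      rw [dif_neg (he2 ▸ hvr : (o e).2 ≠ r)]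
      congr 1
      exact Subtype.ext he2
    have hmem : e ∈ S ∪ A := hSA ▸ Set.mem_univ e
    rcases hmem with h | h
    · exact ⟨.img e, h, hhead⟩
    · exact ⟨.wout e, h, hhead⟩
  | vout v => exact ⟨.par v 0 b₀, rfl, rfl⟩
  | root => exact absurd rfl hu
  | w c => exact ⟨.loop c b₀, rfl, rfl⟩

end Forward

/-- Let `G = (V, E)` be an edge-colored graph whose edge set is the
disjoint union of two spanning trees and in which each color class contains exactly two
edges, and let `D = (U, A)` be the digraph constructed from `G` (using an orientation
`o` of `G` in which `r` has in-degree 0 and every other vertex in-degree 2, and a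
labeling `slot` distinguishing the two arcs entering each vertex).  Then the edge set
of `G` can be partitioned into two rainbow spanning trees if and only if `A` can be
partitioned into two weakly connected spanning subgraphs such that every vertex
`u ∈ U - r` has positive in-degree in both of them. -/
theorem rainbow_iff_digraph_decomposition {V E C : Type*} [DecidableEq V] [Fintype V] [Fintype E] [Fintype C]
    (ends : E → Sym2 V) (color : E → C) (r : V)
    (T₁ T₂ : Set E) (hU : T₁ ∪ T₂ = Set.univ) (hD : Disjoint T₁ T₂)
    (h₁ : IsSpanningTree ends T₁) (h₂ : IsSpanningTree ends T₂)
    (hcol : ∀ c : C, {e : E | color e = c}.ncard = 2)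
    (o : E → V × V) (ho : ∀ e : E, s((o e).1, (o e).2) = ends e)
    (hr : {e : E | (o e).2 = r} = ∅)
    (hv : ∀ v : V, v ≠ r → {e : E | (o e).2 = v}.ncard = 2)
    (slot : E → Fin 2)
    (hslot : ∀ e f : E, (o e).2 = (o f).2 → slot e = slot f → e = f) :
    (∃ S₁ S₂ : Set E, S₁ ∪ S₂ = Set.univ ∧ Disjoint S₁ S₂ ∧
      IsSpanningTree ends S₁ ∧ IsSpanningTree ends S₂ ∧ Rainbow color S₁ ∧ Rainbow color S₂) ↔
    (∃ F₁ F₂ : Set (UArc V E C r), F₁ ∪ F₂ = Set.univ ∧ Disjoint F₁ F₂ ∧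
      Connects (uEnds color o slot) F₁ ∧ Connects (uEnds color o slot) F₂ ∧
      (∀ u : UVtx V C r, u ≠ UVtx.root → ∃ a ∈ F₁, arcHead color o slot a = u) ∧
      (∀ u : UVtx V C r, u ≠ UVtx.root → ∃ a ∈ F₂, arcHead color o slot a = u)) := by
  classical
  have hr' : ∀ e : E, (o e).2 ≠ r := by
    intro e h
    have : e ∈ {e : E | (o e).2 = r} := h
    rw [hr] at this
    exact this
  constructor
  · rintro ⟨S₁, S₂, hSu, hSd, hS₁, hS₂, hR₁, hR₂⟩
    have hA₂ : ∀ (S T : Set E), S ∪ T = Set.univ → Rainbow color S →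
        ∀ c : C, ∃ e, color e = c ∧ e ∈ T := by
      intro S T hST hRS c
      obtain ⟨e, f, hne, he, hf, hall⟩ := class_pair color hcol c
      by_cases h1 : e ∈ T
      · exact ⟨e, he, h1⟩
      · have h1' : e ∈ S := by
          rcases (hST ▸ Set.mem_univ e : e ∈ S ∪ T) with h | h
          · exact h
          · exact absurd h h1
        by_cases h2 : f ∈ T
        · exact ⟨f, hf, h2⟩
        · have h2' : f ∈ S := by
            rcases (hST ▸ Set.mem_univ f : f ∈ S ∪ T) with h | h
            · exact h
            · exact absurd h h2
          exact absurd (hRS e h1' f h2' (he.trans hf.symm)) hne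
    refine ⟨Fside (C := C) r S₁ S₂ 0, Fside (C := C) r S₂ S₁ 1, ?_, ?_,
      connects_Fside ends color o slot ho hr' 0 hS₁.1 (hA₂ S₁ S₂ hSu hR₁),
      connects_Fside ends color o slot ho hr' 1 hS₂.1
        (hA₂ S₂ S₁ (by rw [Set.union_comm]; exact hSu) hR₂),
      indeg_Fside color o slot hr' hv hslot hSu 0,
      indeg_Fside color o slot hr' hv hslot (by rw [Set.union_comm]; exact hSu) 1⟩
    · ext a
      simp only [Set.mem_union, Set.mem_univ, iff_true]
      cases a with
      | par v i b =>
        rcases fin2_or b with h | h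
        · exact Or.inl h
        · exact Or.inr h
      | img e =>
        rcases (hSu ▸ Set.mem_univ e : e ∈ S₁ ∪ S₂) with h | h
        · exact Or.inl h
        · exact Or.inr h
      | wout e =>
        rcases (hSu ▸ Set.mem_univ e : e ∈ S₁ ∪ S₂) with h | h
        · exact Or.inr h
        · exact Or.inl h
      | loop c b =>
        rcases fin2_or b with h | h
        · exact Or.inl h
        · exact Or.inr h
    · rw [Set.disjoint_left]
      intro a h1 h2
      cases a with
      | par v i b =>
        have h1' : b = 0 := h1
        have h2' : b = 1 := h2
        rw [h1'] at h2'
        exact absurd h2' (by decide)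
      | img e => exact Set.disjoint_left.1 hSd h1 h2
      | wout e => exact Set.disjoint_left.1 hSd h2 h1
      | loop c b =>
        have h1' : b = 0 := h1
        have h2' : b = 1 := h2
        rw [h1'] at h2'
        exact absurd h2' (by decide)
  · rintro ⟨F₁, F₂, hF, hd, hc₁, hc₂, hin₁, hin₂⟩
    have hF' : F₂ ∪ F₁ = Set.univ := by rw [Set.union_comm]; exact hF
    have rb₁ : Rainbow color {e : E | (UArc.img e : UArc V E C r) ∈ F₁} :=
      rainbow_rev color o slot hF hd hr' hslot hcol hc₁ hin₁ hin₂
    have rb₂ : Rainbow color {e : E | (UArc.img e : UArc V E C r) ∈ F₂} :=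
      rainbow_rev color o slot hF' hd.symm hr' hslot hcol hc₂ hin₂ hin₁
    have hcS₁ : Connects ends {e : E | (UArc.img e : UArc V E C r) ∈ F₁} :=
      connects_rev ends color o slot ho hF hd hr' hslot hcol hc₁ hin₁ hin₂ rb₁ rb₂
    have hcS₂ : Connects ends {e : E | (UArc.img e : UArc V E C r) ∈ F₂} :=
      connects_rev ends color o slot ho hF' hd.symm hr' hslot hcol hc₂ hin₂ hin₁ rb₂ rb₁
    set S₁ : Set E := {e : E | (UArc.img e : UArc V E C r) ∈ F₁} with hS₁def
    set S₂ : Set E := {e : E | (UArc.img e : UArc V E C r) ∈ F₂} with hS₂def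
    have hSu : S₁ ∪ S₂ = Set.univ := by
      ext e
      simp only [Set.mem_union, Set.mem_univ, iff_true]
      exact (hF ▸ Set.mem_univ (UArc.img e : UArc V E C r) :
        (UArc.img e : UArc V E C r) ∈ F₁ ∪ F₂)
    have hSd : Disjoint S₁ S₂ := by
      rw [Set.disjoint_left]
      intro e h1 h2
      exact Set.disjoint_left.1 hd h1 h2
    have t₁ := spanningTree_ncard ends h₁ r
    have t₂ := spanningTree_ncard ends h₂ r
    have eT : (T₁ ∪ T₂).ncard = T₁.ncard + T₂.ncard :=
      Set.ncard_union_eq hD (Set.toFinite _) (Set.toFinite _)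
    have eS : (S₁ ∪ S₂).ncard = S₁.ncard + S₂.ncard :=
      Set.ncard_union_eq hSd (Set.toFinite _) (Set.toFinite _)
    have htot : S₁.ncard + S₂.ncard = T₁.ncard + T₂.ncard := by
      rw [← eT, ← eS, hU, hSu]
    have g₁ := connects_le_ncard ends hcS₁ r
    have g₂ := connects_le_ncard ends hcS₂ r
    have n₁ : S₁.ncard + 1 = Fintype.card V := by omega
    have n₂ : S₂.ncard + 1 = Fintype.card V := by omega
    have hmin : ∀ (S : Set E), Connects ends S → S.ncard + 1 = Fintype.card V →
        ∀ e ∈ S, ¬ Connects ends (S \ {e}) := by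
      intro S hc hn e he hconn
      have h1 : (S \ {e}).ncard = S.ncard - 1 :=
        Set.ncard_diff_singleton_of_mem he
      have h2 : 0 < S.ncard := (Set.ncard_pos (Set.toFinite _)).2 ⟨e, he⟩
      have h3 := connects_le_ncard ends hconn r
      omega
    exact ⟨S₁, S₂, hSu, hSd, ⟨hcS₁, hmin S₁ hcS₁ n₁⟩, ⟨hcS₂, hmin S₂ hcS₂ n₂⟩, rb₁, rb₂⟩


end DigraphStmt6
end

section
/- Let G=(V,E) be an edge-colored graph whose edge set is the disjoint union of two spanning trees, in which each color class contains exactly two edges, and let D=(U,A) be the digraph constructed from G. If the edge set of G can be partitioned into two rainbow spanning trees, then A can be partitioned into two weakly connected spanning subgraphs such that every vertex u∈U−r has positive in-degree in both of them. -/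
namespace DigraphStmt7

/-- An edge of the multigraph connects via set `F`. -/
def Step {V E : Type*} (ends : E → Sym2 V) (F : Set E) (a b : V) : Prop :=
  ∃ e ∈ F, ends e = s(a, b)

/-- The edge set `F` connects the whole multigraph with endpoint map `ends`. -/
def Connects {V E : Type*} (ends : E → Sym2 V) (F : Set E) : Prop :=
  ∀ a b : V, Relation.ReflTransGen (Step ends F) a b

/-- `F` is a spanning tree: it connects all vertices, minimally so. -/
def IsSpanningTree {V E : Type*} (ends : E → Sym2 V) (F : Set E) : Prop :=
  Connects ends F ∧ ∀ e ∈ F, ¬ Connects ends (F \ {e})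

/-- `F` is rainbow: each color class contains at most one edge of `F`. -/
def Rainbow {E C : Type*} (color : E → C) (F : Set E) : Prop :=
  ∀ e ∈ F, ∀ f ∈ F, color e = color f → e = f

/-- The vertex set `U` of the digraph `D`: for every `v ∈ V - r` the vertices
`v^in_1, v^in_2, v^out`; a copy of `r` (`root`); and a vertex `w c` for each color `c`. -/
inductive UVtx (V C : Type*) (r : V) where
  | vin (v : {x : V // x ≠ r}) (i : Fin 2)
  | vout (v : {x : V // x ≠ r})
  | root
  | w (c : C)

/-- The arc set `A` of the digraph `D`: for every `v ∈ V - r` and `i ∈ [2]` two parallel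
arcs (`par v i b`, `b ∈ [2]`) from `v^in_i` to `v^out`; for every edge `e` of `G` its image
arc `img e`; for every edge `e` of `G` an arc `wout e` leaving `w (color e)`; and two
loops `loop c b` at each `w c`. -/
inductive UArc (V E C : Type*) (r : V) where
  | par (v : {x : V // x ≠ r}) (i : Fin 2) (b : Fin 2)
  | img (e : E)
  | wout (e : E)
  | loop (c : C) (b : Fin 2)

variable {V E C : Type*} [DecidableEq V]

/-- The vertex `x^in_i` of `D`, where `x` is replaced by `root` if `x = r`. -/
def toIn {C : Type*} (r : V) (x : V) (i : Fin 2) : UVtx V C r :=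
  if h : x = r then UVtx.root else UVtx.vin ⟨x, h⟩ i

/-- The vertex `x^out` of `D`, where `x^out` is replaced by `root` if `x = r`. -/
def toOut {C : Type*} (r : V) (x : V) : UVtx V C r :=
  if h : x = r then UVtx.root else UVtx.vout ⟨x, h⟩

/-- The tail of an arc of `D`.  Here `o e = (tail, head)` is the orientation of the edge
`e` of `G` and `slot e ∈ [2]` tells whether the image of `e` enters `(head)^in_1` or
`(head)^in_2`. -/
def arcTail {r : V} (color : E → C) (o : E → V × V) (slot : E → Fin 2) :
    UArc V E C r → UVtx V C r
  | .par v i _ => UVtx.vin v i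
  | .img e => toOut r (o e).1
  | .wout e => UVtx.w (color e)
  | .loop c _ => UVtx.w c

/-- The head of an arc of `D`. -/
def arcHead {r : V} (color : E → C) (o : E → V × V) (slot : E → Fin 2) :
    UArc V E C r → UVtx V C r
  | .par v _ _ => UVtx.vout v
  | .img e => toIn r (o e).2 (slot e)
  | .wout e => toIn r (o e).2 (slot e)
  | .loop c _ => UVtx.w c

/-- The endpoints of an arc of `D`, forgetting its direction. -/
def uEnds {r : V} (color : E → C) (o : E → V × V) (slot : E → Fin 2)
    (a : UArc V E C r) : Sym2 (UVtx V C r) :=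
  s(arcTail color o slot a, arcHead color o slot a)


/-- The arc set assigned to the first rainbow tree. -/
def Fset {V E C : Type*} (r : V) (S : Set E) : Set (UArc V E C r) := fun a =>
  match a with
  | UArc.par _ _ b => b = 0
  | UArc.img e => e ∈ S
  | UArc.wout e => e ∉ S
  | UArc.loop _ b => b = 0

lemma connects_of {V E C : Type*} [DecidableEq V]
    (ends : E → Sym2 V) (color : E → C) (r : V) (o : E → V × V)
    (ho : ∀ e, s((o e).1, (o e).2) = ends e) (slot : E → Fin 2)
    (F : Set (UArc V E C r)) (S : Set E)
    (hpar : ∀ v i, ∃ b, UArc.par v i b ∈ F)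
    (himg : ∀ e ∈ S, UArc.img e ∈ F)
    (hwc : ∀ c : C, ∃ e, color e = c ∧ UArc.wout e ∈ F)
    (hS : Connects ends S) :
    Connects (uEnds color o slot) F := by
  set R := Step (uEnds color o slot) F with hR
  have hsymm : ∀ a b, R a b → R b a := by
    rintro a b ⟨e, he, h⟩
    exact ⟨e, he, h.trans (Sym2.eq_swap)⟩
  have hsymR : ∀ {a b}, Relation.ReflTransGen R a b → Relation.ReflTransGen R b a :=
    fun h => by
      induction h with
      | refl => exact Relation.ReflTransGen.refl
      | tail _ h2 ih => exact Relation.ReflTransGen.head (hsymm _ _ h2) ih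
  have hIO : ∀ (x : V) (i : Fin 2),
      Relation.ReflTransGen R (toIn r x i) (toOut r x) := by
    intro x i
    by_cases hx : x = r
    · simp only [toIn, toOut, dif_pos hx]
      exact Relation.ReflTransGen.refl
    · obtain ⟨b, hb⟩ := hpar ⟨x, hx⟩ i
      refine Relation.ReflTransGen.single ⟨UArc.par ⟨x, hx⟩ i b, hb, ?_⟩
      simp [uEnds, arcTail, arcHead, toIn, toOut, hx]
  have hOO : ∀ a b : V, Step ends S a b →
      Relation.ReflTransGen R (toOut r a) (toOut r b) := by
    rintro a b ⟨e, heS, hends⟩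
    have h2 : s((o e).1, (o e).2) = s(a, b) := (ho e).trans hends
    have himgstep : R (toOut r (o e).1) (toIn r (o e).2 (slot e)) :=
      ⟨UArc.img e, himg e heS, rfl⟩
    rw [Sym2.eq_iff] at h2
    rcases h2 with ⟨h1, h2⟩ | ⟨h1, h2⟩
    · subst h1; subst h2
      exact (Relation.ReflTransGen.single himgstep).trans (hIO _ _)
    · subst h1; subst h2
      exact (hsymR (hIO _ _)).trans
        (Relation.ReflTransGen.single (hsymm _ _ himgstep))
  have hlift : ∀ a b : V, Relation.ReflTransGen (Step ends S) a b →
      Relation.ReflTransGen R (toOut r a) (toOut r b) := by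
    intro a b h
    induction h with
    | refl => exact Relation.ReflTransGen.refl
    | tail _ h2 ih => exact ih.trans (hOO _ _ h2)
  have hOroot : ∀ x : V, Relation.ReflTransGen R (toOut r x) UVtx.root := by
    intro x
    have h := hlift x r (hS x r)
    simpa [toOut] using h
  have hall : ∀ u : UVtx V C r, Relation.ReflTransGen R u UVtx.root := by
    intro u
    cases u with
    | vin v i =>
      have h1 := (hIO v.1 i).trans (hOroot v.1)
      simpa [toIn, v.2] using h1
    | vout v => simpa [toOut, v.2] using hOroot v.1
    | root => exact Relation.ReflTransGen.refl
    | w c =>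
      obtain ⟨e, hce, hwF⟩ := hwc c
      subst hce
      exact (Relation.ReflTransGen.single ⟨UArc.wout e, hwF, rfl⟩).trans
        ((hIO _ _).trans (hOroot _))
  intro a b
  exact (hall a).trans (hsymR (hall b))

/-- With `G` and `D` as above: if the edge set of `G` can be
partitioned into two rainbow spanning trees, then `A` can be partitioned into two weakly
connected spanning subgraphs such that every vertex `u ∈ U - r` has positive in-degree
in both of them. -/
theorem digraph_decomposition_of_rainbow {V E C : Type*} [DecidableEq V] [Fintype V] [Fintype E] [Fintype C]
    (ends : E → Sym2 V) (color : E → C) (r : V)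
    (T₁ T₂ : Set E) (hU : T₁ ∪ T₂ = Set.univ) (hD : Disjoint T₁ T₂)
    (h₁ : IsSpanningTree ends T₁) (h₂ : IsSpanningTree ends T₂)
    (hcol : ∀ c : C, {e : E | color e = c}.ncard = 2)
    (o : E → V × V) (ho : ∀ e : E, s((o e).1, (o e).2) = ends e)
    (hr : {e : E | (o e).2 = r} = ∅)
    (hv : ∀ v : V, v ≠ r → {e : E | (o e).2 = v}.ncard = 2)
    (slot : E → Fin 2)
    (hslot : ∀ e f : E, (o e).2 = (o f).2 → slot e = slot f → e = f)
    (hrst : ∃ S₁ S₂ : Set E, S₁ ∪ S₂ = Set.univ ∧ Disjoint S₁ S₂ ∧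
      IsSpanningTree ends S₁ ∧ IsSpanningTree ends S₂ ∧ Rainbow color S₁ ∧ Rainbow color S₂) :
    ∃ F₁ F₂ : Set (UArc V E C r), F₁ ∪ F₂ = Set.univ ∧ Disjoint F₁ F₂ ∧
      Connects (uEnds color o slot) F₁ ∧ Connects (uEnds color o slot) F₂ ∧
      (∀ u : UVtx V C r, u ≠ UVtx.root → ∃ a ∈ F₁, arcHead color o slot a = u) ∧
      (∀ u : UVtx V C r, u ≠ UVtx.root → ∃ a ∈ F₂, arcHead color o slot a = u) := by
  obtain ⟨S₁, S₂, hU', hD', h₁', h₂', hrb₁, hrb₂⟩ := hrst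
  have hmemU : ∀ e : E, e ∈ S₁ ∨ e ∈ S₂ := by
    intro e
    have : e ∈ S₁ ∪ S₂ := by rw [hU']; trivial
    exact this
  -- the two color-class edges
  have hcc : ∀ c : C, ∃ e f : E, e ≠ f ∧ color e = c ∧ color f = c ∧
      ∀ x : E, color x = c → x = e ∨ x = f := by
    intro c
    obtain ⟨e, f, hef, hset⟩ := Set.ncard_eq_two.mp (hcol c)
    have he : color e = c := by
      have : e ∈ {x : E | color x = c} := by rw [hset]; exact Set.mem_insert _ _
      exact this
    have hf : color f = c := by
      have : f ∈ {x : E | color x = c} := by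
        rw [hset]; exact Set.mem_insert_of_mem _ rfl
      exact this
    refine ⟨e, f, hef, he, hf, ?_⟩
    intro x hx
    have : x ∈ ({e, f} : Set E) := by rw [← hset]; exact hx
    simpa using this
  have hnotS₁ : ∀ c : C, ∃ e, color e = c ∧ e ∉ S₁ := by
    intro c
    obtain ⟨e, f, hef, he, hf, _⟩ := hcc c
    by_cases h1 : e ∈ S₁
    · refine ⟨f, hf, fun h2 => hef (hrb₁ e h1 f h2 (he.trans hf.symm))⟩
    · exact ⟨e, he, h1⟩
  have hinS₁ : ∀ c : C, ∃ e, color e = c ∧ e ∈ S₁ := by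
    intro c
    obtain ⟨e, f, hef, he, hf, _⟩ := hcc c
    by_cases h1 : e ∈ S₁
    · exact ⟨e, he, h1⟩
    · refine ⟨f, hf, ?_⟩
      by_contra h2
      exact hef (hrb₂ e ((hmemU e).resolve_left h1) f ((hmemU f).resolve_left h2)
        (he.trans hf.symm))
  -- unique edge entering v in slot i
  have hedge : ∀ v : V, v ≠ r → ∀ i : Fin 2, ∃ e, (o e).2 = v ∧ slot e = i := by
    intro v hvr i
    obtain ⟨e, f, hef, hset⟩ := Set.ncard_eq_two.mp (hv v hvr)
    have he : (o e).2 = v := by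
      have : e ∈ {x : E | (o x).2 = v} := by rw [hset]; exact Set.mem_insert _ _
      exact this
    have hf : (o f).2 = v := by
      have : f ∈ {x : E | (o x).2 = v} := by
        rw [hset]; exact Set.mem_insert_of_mem _ rfl
      exact this
    have hsl : slot e ≠ slot f := fun h => hef (hslot e f (he.trans hf.symm) h)
    have key : ∀ a b c : Fin 2, a ≠ b → c = a ∨ c = b := by decide
    rcases key (slot e) (slot f) i hsl with h | h
    · exact ⟨e, he, h.symm⟩
    · exact ⟨f, hf, h.symm⟩
  refine ⟨Fset r S₁, (Fset r S₁)ᶜ, Set.union_compl_self _, disjoint_compl_right,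
    ?_, ?_, ?_, ?_⟩
  · refine connects_of ends color r o ho slot _ S₁ ?_ ?_ ?_ h₁'.1
    · intro v i; exact ⟨0, rfl⟩
    · intro e he; exact he
    · intro c
      obtain ⟨e, hce, hes⟩ := hnotS₁ c
      exact ⟨e, hce, hes⟩
  · refine connects_of ends color r o ho slot _ S₂ ?_ ?_ ?_ h₂'.1
    · intro v i
      refine ⟨1, ?_⟩
      show ¬ ((1 : Fin 2) = 0)
      decide
    · intro e he
      show ¬ (e ∈ S₁)
      exact Set.disjoint_right.mp hD' he
    · intro c
      obtain ⟨e, hce, hes⟩ := hinS₁ c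
      exact ⟨e, hce, fun h => h hes⟩
  · intro u hu
    cases u with
    | vin v i =>
      obtain ⟨e, he2, hsl⟩ := hedge v.1 v.2 i
      have hhead : toIn (C := C) r (o e).2 (slot e) = UVtx.vin v i := by
        rw [he2, hsl]; simp [toIn, v.2]
      by_cases h1 : e ∈ S₁
      · exact ⟨UArc.img e, h1, hhead⟩
      · exact ⟨UArc.wout e, h1, hhead⟩
    | vout v => exact ⟨UArc.par v 0 0, rfl, rfl⟩
    | root => exact absurd rfl hu
    | w c => exact ⟨UArc.loop c 0, rfl, rfl⟩
  · intro u hu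
    cases u with
    | vin v i =>
      obtain ⟨e, he2, hsl⟩ := hedge v.1 v.2 i
      have hhead : toIn (C := C) r (o e).2 (slot e) = UVtx.vin v i := by
        rw [he2, hsl]; simp [toIn, v.2]
      by_cases h1 : e ∈ S₁
      · exact ⟨UArc.wout e, fun h => h h1, hhead⟩
      · exact ⟨UArc.img e, h1, hhead⟩
    | vout v =>
      refine ⟨UArc.par v 0 1, ?_, rfl⟩
      show ¬ ((1 : Fin 2) = 0)
      decide
    | root => exact absurd rfl hu
    | w c =>
      refine ⟨UArc.loop c 1, ?_, rfl⟩
      show ¬ ((1 : Fin 2) = 0)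
      decide


end DigraphStmt7
end

section
/- Let G=(V,E) be an edge-colored graph whose edge set is the disjoint union of two spanning trees, in which each color class contains exactly two edges, and let D=(U,A) be the digraph constructed from G. If A can be partitioned into two weakly connected spanning subgraphs such that every vertex u∈U−r has positive in-degree in both of them, then the edge set of G can be partitioned into two rainbow spanning trees. -/
namespace DigraphStmt8

/-- An edge of the multigraph connects via set `F`. -/
def Step {V E : Type*} (ends : E → Sym2 V) (F : Set E) (a b : V) : Prop :=
  ∃ e ∈ F, ends e = s(a, b)

/-- The edge set `F` connects the whole multigraph with endpoint map `ends`. -/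
def Connects {V E : Type*} (ends : E → Sym2 V) (F : Set E) : Prop :=
  ∀ a b : V, Relation.ReflTransGen (Step ends F) a b

/-- `F` is a spanning tree: it connects all vertices, minimally so. -/
def IsSpanningTree {V E : Type*} (ends : E → Sym2 V) (F : Set E) : Prop :=
  Connects ends F ∧ ∀ e ∈ F, ¬ Connects ends (F \ {e})

/-- `F` is rainbow: each color class contains at most one edge of `F`. -/
def Rainbow {E C : Type*} (color : E → C) (F : Set E) : Prop :=
  ∀ e ∈ F, ∀ f ∈ F, color e = color f → e = f

/-- The vertex set `U` of the digraph `D`: for every `v ∈ V - r` the vertices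
`v^in_1, v^in_2, v^out`; a copy of `r` (`root`); and a vertex `w c` for each color `c`. -/
inductive UVtx (V C : Type*) (r : V) where
  | vin (v : {x : V // x ≠ r}) (i : Fin 2)
  | vout (v : {x : V // x ≠ r})
  | root
  | w (c : C)

/-- The arc set `A` of the digraph `D`: for every `v ∈ V - r` and `i ∈ [2]` two parallel
arcs (`par v i b`, `b ∈ [2]`) from `v^in_i` to `v^out`; for every edge `e` of `G` its image
arc `img e`; for every edge `e` of `G` an arc `wout e` leaving `w (color e)`; and two
loops `loop c b` at each `w c`. -/
inductive UArc (V E C : Type*) (r : V) where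
  | par (v : {x : V // x ≠ r}) (i : Fin 2) (b : Fin 2)
  | img (e : E)
  | wout (e : E)
  | loop (c : C) (b : Fin 2)

variable {V E C : Type*} [DecidableEq V]

/-- The vertex `x^in_i` of `D`, where `x` is replaced by `root` if `x = r`. -/
def toIn {C : Type*} (r : V) (x : V) (i : Fin 2) : UVtx V C r :=
  if h : x = r then UVtx.root else UVtx.vin ⟨x, h⟩ i

/-- The vertex `x^out` of `D`, where `x^out` is replaced by `root` if `x = r`. -/
def toOut {C : Type*} (r : V) (x : V) : UVtx V C r :=
  if h : x = r then UVtx.root else UVtx.vout ⟨x, h⟩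

/-- The tail of an arc of `D`.  Here `o e = (tail, head)` is the orientation of the edge
`e` of `G` and `slot e ∈ [2]` tells whether the image of `e` enters `(head)^in_1` or
`(head)^in_2`. -/
def arcTail {r : V} (color : E → C) (o : E → V × V) (slot : E → Fin 2) :
    UArc V E C r → UVtx V C r
  | .par v i _ => UVtx.vin v i
  | .img e => toOut r (o e).1
  | .wout e => UVtx.w (color e)
  | .loop c _ => UVtx.w c

/-- The head of an arc of `D`. -/
def arcHead {r : V} (color : E → C) (o : E → V × V) (slot : E → Fin 2) :
    UArc V E C r → UVtx V C r
  | .par v _ _ => UVtx.vout v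
  | .img e => toIn r (o e).2 (slot e)
  | .wout e => toIn r (o e).2 (slot e)
  | .loop c _ => UVtx.w c

/-- The endpoints of an arc of `D`, forgetting its direction. -/
def uEnds {r : V} (color : E → C) (o : E → V × V) (slot : E → Fin 2)
    (a : UArc V E C r) : Sym2 (UVtx V C r) :=
  s(arcTail color o slot a, arcHead color o slot a)

open Relation

lemma Step.symm {V E : Type*} {ends : E → Sym2 V} {F : Set E} {a b : V}
    (h : Step ends F a b) : Step ends F b a := by
  obtain ⟨e, he, hE⟩ := h
  exact ⟨e, he, by rw [hE, Sym2.eq_swap]⟩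

lemma rtg_map_lift {α β : Type*} {r : α → α → Prop} {s : β → β → Prop} (f : α → β)
    (h : ∀ a b, r a b → ReflTransGen s (f a) (f b)) {a b : α} (hr : ReflTransGen r a b) :
    ReflTransGen s (f a) (f b) := by
  induction hr with
  | refl => exact .refl
  | tail _ hstep ih => exact ih.trans (h _ _ hstep)

lemma rtg_lift {α : Type*} {r s : α → α → Prop}
    (h : ∀ a b, r a b → ReflTransGen s a b) {a b : α} (hr : ReflTransGen r a b) :
    ReflTransGen s a b := rtg_map_lift id h hr

lemma rtg_step_symm {V E : Type*} {ends : E → Sym2 V} {F : Set E} {a b : V}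
    (h : ReflTransGen (Step ends F) a b) : ReflTransGen (Step ends F) b a := by
  induction h with
  | refl => exact .refl
  | tail _ hstep ih => exact ReflTransGen.head hstep.symm ih

lemma isSpanningTree_ncard {V E : Type*} [Fintype V] [Nonempty V] (ends : E → Sym2 V) {F : Set E}
    (hT : IsSpanningTree ends F) : F.ncard + 1 = Fintype.card V := by
  classical
  obtain ⟨hconn, hmin⟩ := hT
  -- no loops in F
  have hnd : ∀ e ∈ F, ¬ (ends e).IsDiag := by
    intro e he hdiag
    refine hmin e he (fun a b => rtg_lift ?_ (hconn a b))
    rintro x y ⟨f, hf, hends⟩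
    by_cases hfe : f = e
    · subst hfe
      rw [hends, Sym2.mk_isDiag_iff] at hdiag
      subst hdiag
      exact .refl
    · exact ReflTransGen.single ⟨f, ⟨hf, hfe⟩, hends⟩
  -- ends is injective on F
  have hinj : Set.InjOn ends F := by
    intro e he f hf hef
    by_contra hne
    refine hmin e he (fun a b => rtg_lift ?_ (hconn a b))
    rintro x y ⟨g, hg, hends⟩
    by_cases hge : g = e
    · exact ReflTransGen.single ⟨f, ⟨hf, fun h => hne (Set.mem_singleton_iff.mp h).symm⟩, by rw [← hef, ← hge, hends]⟩
    · exact ReflTransGen.single ⟨g, ⟨hg, hge⟩, hends⟩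
  set G' : SimpleGraph V := SimpleGraph.fromRel (Step ends F) with hG'
  have hadj : ∀ {x y : V}, G'.Adj x y ↔ x ≠ y ∧ (Step ends F x y ∨ Step ends F y x) := by
    intro x y; rw [hG', SimpleGraph.fromRel_adj]
  have hadj' : ∀ {x y : V}, G'.Adj x y → ∃ e ∈ F, ends e = s(x, y) := by
    intro x y h
    rcases (hadj.mp h).2 with h' | h'
    · exact h'
    · exact h'.symm
  have hreach : ∀ a b : V, ReflTransGen (Step ends F) a b → G'.Reachable a b := by
    intro a b h
    induction h with
    | refl => exact SimpleGraph.Reachable.refl _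
    | tail _ hstep ih =>
      rename_i x y _
      by_cases hxy : x = y
      · exact hxy ▸ ih
      · exact ih.trans (SimpleGraph.Adj.reachable (hadj.mpr ⟨hxy, Or.inl hstep⟩))
  have hGconn : G'.Connected := by
    rw [SimpleGraph.connected_iff]
    exact ⟨fun a b => hreach a b (hconn a b), inferInstance⟩
  -- walks in the graph with an edge deleted give paths avoiding the corresponding edge
  have hwalk : ∀ (e₀ : E) (x y : V),
      (G' \ SimpleGraph.fromEdgeSet {ends e₀}).Reachable x y →
      ReflTransGen (Step ends (F \ {e₀})) x y := by
    intro e₀ x y hxy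
    obtain ⟨p⟩ := hxy
    induction p with
    | nil => exact .refl
    | cons h p ih =>
      rename_i u v w h'
      rw [SimpleGraph.sdiff_adj] at h
      obtain ⟨e, he, hE⟩ := hadj' h.1
      have hne : e ≠ e₀ := by
        intro hcontra
        exact h.2 ((SimpleGraph.fromEdgeSet_adj _).mpr
          ⟨by rw [← hE, hcontra]; exact Set.mem_singleton _, (hadj.mp h.1).1⟩)
      exact ReflTransGen.head ⟨e, ⟨he, hne⟩, hE⟩ ih
  have hacyc : G'.IsAcyclic := by
    rw [SimpleGraph.isAcyclic_iff_forall_edge_isBridge]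
    intro ε hε
    revert hε
    induction ε using Sym2.ind with
    | _ v w =>
    intro hε
    rw [SimpleGraph.isBridge_iff]
    have hvwadj : G'.Adj v w := hε
    refine fun hreach' => ?_
    obtain ⟨e₀, he₀, hE₀⟩ := hadj' hvwadj
    refine hmin e₀ he₀ (fun a b => rtg_lift ?_ (hconn a b))
    rintro x y ⟨g, hg, hends⟩
    by_cases hge : g = e₀
    · subst hge
      have h2 := hwalk g v w (by rwa [hE₀])
      rw [hE₀] at hends
      rcases Sym2.eq_iff.mp hends with ⟨h3, h4⟩ | ⟨h3, h4⟩
      · subst h3; subst h4; exact h2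
      · subst h3; subst h4; exact rtg_step_symm h2
    · exact ReflTransGen.single ⟨g, ⟨hg, hge⟩, hends⟩
  have htree : G'.IsTree := ⟨hGconn, hacyc⟩
  have : Fintype ↥G'.edgeSet := Fintype.ofFinite _
  have hcard := htree.card_edgeFinset
  have himg : ends '' F = G'.edgeSet := by
    ext ε
    constructor
    · rintro ⟨e, he, rfl⟩
      obtain ⟨a, b, hab⟩ : ∃ a b, ends e = s(a, b) := Sym2.exists.mp ⟨ends e, rfl⟩
      rw [hab, SimpleGraph.mem_edgeSet]
      refine hadj.mpr ⟨?_, Or.inl ⟨e, he, hab⟩⟩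
      intro hab'
      exact hnd e he (by rw [hab, Sym2.mk_isDiag_iff]; exact hab')
    · intro hε
      revert hε
      induction ε using Sym2.ind with
      | _ a b =>
      intro hε
      obtain ⟨e, he, hE⟩ := hadj' ((SimpleGraph.mem_edgeSet _).mp hε)
      exact ⟨e, he, hE⟩
  have h1 : F.ncard = G'.edgeSet.ncard := by
    rw [← himg, Set.ncard_image_of_injOn hinj]
  rw [h1, Set.ncard_eq_toFinset_card', ← SimpleGraph.edgeFinset]
  convert hcard using 2


lemma exists_spanningTree_subset {V E : Type*} [Fintype E] (ends : E → Sym2 V) {F : Set E}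
    (h : Connects ends F) : ∃ F' ⊆ F, IsSpanningTree ends F' := by
  classical
  generalize hn : F.ncard = n
  induction n using Nat.strong_induction_on generalizing F with
  | _ n ih =>
    by_cases hm : ∀ e ∈ F, ¬ Connects ends (F \ {e})
    · exact ⟨F, subset_rfl, h, hm⟩
    · push_neg at hm
      obtain ⟨e, he, hce⟩ := hm
      have hlt : (F \ {e}).ncard < n := by
        rw [← hn]
        exact Set.ncard_diff_singleton_lt_of_mem he F.toFinite
      obtain ⟨F', hsub, hF'⟩ := ih _ hlt hce rfl
      exact ⟨F', hsub.trans Set.diff_subset, hF'⟩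

lemma connects_card_le {V E : Type*} [Fintype V] [Fintype E] [Nonempty V] (ends : E → Sym2 V)
    {F : Set E} (h : Connects ends F) : Fintype.card V ≤ F.ncard + 1 := by
  obtain ⟨F', hsub, hT⟩ := exists_spanningTree_subset ends h
  have h1 := isSpanningTree_ncard ends hT
  have h2 : F'.ncard ≤ F.ncard := Set.ncard_le_ncard hsub F.toFinite
  omega

lemma isSpanningTree_of_connects_ncard {V E : Type*} [Fintype V] [Fintype E] [Nonempty V]
    (ends : E → Sym2 V) {F : Set E} (h : Connects ends F)
    (hc : F.ncard + 1 = Fintype.card V) : IsSpanningTree ends F := by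
  refine ⟨h, fun e he hcon => ?_⟩
  have h1 := connects_card_le ends hcon
  have h2 : (F \ {e}).ncard = F.ncard - 1 := Set.ncard_diff_singleton_of_mem he
  have h3 : 0 < F.ncard := (Set.ncard_pos F.toFinite).mpr ⟨e, he⟩
  omega

section Dside
variable {V E C : Type*} [DecidableEq V] {r : V}

lemma toIn_ne_w (x : V) (i : Fin 2) (c : C) : toIn (C := C) r x i ≠ UVtx.w c := by
  unfold toIn; split <;> simp

lemma toOut_ne_w (x : V) (c : C) : toOut (C := C) r x ≠ UVtx.w c := by
  unfold toOut; split <;> simp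

lemma toIn_ne_vout (x : V) (i : Fin 2) (v : {x : V // x ≠ r}) :
    toIn (C := C) r x i ≠ UVtx.vout v := by
  unfold toIn; split <;> simp

/-- Projection of digraph vertices back to `V`. -/
def proj (r : V) (κ : C → V) : UVtx V C r → V
  | .vin v _ => v.1
  | .vout v => v.1
  | .root => r
  | .w c => κ c

lemma proj_toOut (κ : C → V) (x : V) : proj r κ (toOut (C := C) r x) = x := by
  unfold toOut; split
  · rename_i h; rw [h]; rfl
  · rfl

lemma proj_toIn (κ : C → V) (x : V) (i : Fin 2) : proj r κ (toIn (C := C) r x i) = x := by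
  unfold toIn; split
  · rename_i h; rw [h]; rfl
  · rfl

/-- If no `wout` of color `c` is present, `F` cannot connect `w c` to the root. -/
lemma no_wout_disconnect (color : E → C) (o : E → V × V) (slot : E → Fin 2)
    {F : Set (UArc V E C r)} (hc : Connects (uEnds color o slot) F)
    (c : C) (hno : ∀ e, color e = c → UArc.wout e ∉ F) : False := by
  have key : ∀ z, ReflTransGen (Step (uEnds color o slot) F) (UVtx.w c) z → z = UVtx.w c := by
    intro z hz
    induction hz with
    | refl => rfl
    | tail hxy hstep ih =>
      subst ih
      obtain ⟨a, haF, hends⟩ := hstep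
      cases a with
      | par v i b =>
        rcases Sym2.eq_iff.mp hends with ⟨h1, h2⟩ | ⟨h1, h2⟩
        · exact absurd h1 (by simp [arcTail])
        · exact absurd h2 (by simp [arcHead])
      | img f =>
        rcases Sym2.eq_iff.mp hends with ⟨h1, h2⟩ | ⟨h1, h2⟩
        · exact absurd h1 (toOut_ne_w _ _)
        · exact absurd h2 (toIn_ne_w _ _ _)
      | wout f =>
        rcases Sym2.eq_iff.mp hends with ⟨h1, h2⟩ | ⟨h1, h2⟩
        · have : color f = c := by injection h1
          exact absurd haF (hno f this)
        · exact absurd h2 (toIn_ne_w _ _ _)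
      | loop c' b =>
        simp only [uEnds, arcTail, arcHead] at hends
        rcases Sym2.eq_iff.mp hends with ⟨h1, h2⟩ | ⟨h1, h2⟩
        · rw [← h2]; exact h1
        · rw [← h1]; exact h2
  have := key UVtx.root (hc _ _)
  exact absurd this (by simp)

/-- The main auxiliary result on one side of the decomposition. -/
lemma main_aux (ends : E → Sym2 V) (color : E → C)
    (hcol : ∀ c : C, {e : E | color e = c}.ncard = 2)
    (o : E → V × V) (ho : ∀ e : E, s((o e).1, (o e).2) = ends e)
    (hr : {e : E | (o e).2 = r} = ∅)
    (slot : E → Fin 2)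
    (hslot : ∀ e f : E, (o e).2 = (o f).2 → slot e = slot f → e = f)
    (F F' : Set (UArc V E C r))
    (hU : F ∪ F' = Set.univ) (hd : Disjoint F F')
    (hcF : Connects (uEnds color o slot) F) (hcF' : Connects (uEnds color o slot) F')
    (hdF : ∀ u : UVtx V C r, u ≠ UVtx.root → ∃ a ∈ F, arcHead color o slot a = u)
    (hdF' : ∀ u : UVtx V C r, u ≠ UVtx.root → ∃ a ∈ F', arcHead color o slot a = u) :
    Connects ends {e : E | UArc.img e ∈ F} ∧ Rainbow color {e : E | UArc.img e ∈ F} := by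
  classical
  have hnr : ∀ e : E, (o e).2 ≠ r := fun e h => Set.eq_empty_iff_forall_notMem.mp hr e h
  -- which arcs can enter `vin v i`
  have hcases : ∀ (e : E) (a : UArc V E C r),
      arcHead color o slot a = UVtx.vin ⟨(o e).2, hnr e⟩ (slot e) →
      a = UArc.img e ∨ a = UArc.wout e := by
    intro e a h
    have hgen : ∀ f : E, toIn (C := C) r (o f).2 (slot f) = UVtx.vin ⟨(o e).2, hnr e⟩ (slot e) →
        f = e := by
      intro f hf
      unfold toIn at hf
      rw [dif_neg (hnr f)] at hf
      injection hf with h1 h2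
      exact hslot f e (by injection h1) h2
    cases a with
    | par v i b => exact absurd h (by simp [arcHead])
    | img f => exact Or.inl (by rw [hgen f h])
    | wout f => exact Or.inr (by rw [hgen f h])
    | loop c' b => exact absurd h (by simp [arcHead])
  have hsplit : ∀ e : E, (UArc.img e ∈ F ∧ UArc.wout e ∈ F') ∨
      (UArc.img e ∈ F' ∧ UArc.wout e ∈ F) := by
    intro e
    obtain ⟨a, haF, hha⟩ := hdF (UVtx.vin ⟨(o e).2, hnr e⟩ (slot e)) (by simp)
    obtain ⟨b, hbF, hhb⟩ := hdF' (UVtx.vin ⟨(o e).2, hnr e⟩ (slot e)) (by simp)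
    have hab : a ≠ b := fun h => Set.disjoint_left.mp hd haF (h ▸ hbF)
    rcases hcases e a hha with rfl | rfl <;> rcases hcases e b hhb with rfl | rfl
    · exact absurd rfl hab
    · exact Or.inl ⟨haF, hbF⟩
    · exact Or.inr ⟨hbF, haF⟩
    · exact absurd rfl hab
  -- each color class has exactly one `wout` in `F` etc.
  have hclass : ∀ (c : C) (e f : E), e ≠ f → color e = c → color f = c →
      ∀ g : E, color g = c → g = e ∨ g = f := by
    intro c e f hef hec hfc g hgc
    obtain ⟨x, y, hxy, hset⟩ := Set.ncard_eq_two.mp (hcol c)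
    have hmem : ∀ z : E, color z = c → z = x ∨ z = y := by
      intro z hz
      have : z ∈ ({x, y} : Set E) := hset ▸ hz
      simpa using this
    rcases hmem e hec with rfl | rfl <;> rcases hmem f hfc with rfl | rfl <;>
      rcases hmem g hgc with rfl | rfl <;> tauto
  have hwuniq : ∀ (e f : E), color e = color f → UArc.wout e ∈ F → UArc.wout f ∈ F → e = f := by
    intro e f hc he hf
    by_contra hne
    refine no_wout_disconnect color o slot hcF' (color e) (fun g hg hgF' => ?_)
    rcases hclass (color e) e f hne rfl hc.symm g hg with rfl | rfl
    · exact Set.disjoint_left.mp hd he hgF'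
    · exact Set.disjoint_left.mp hd hf hgF'
  have hrainbow : Rainbow color {e : E | UArc.img e ∈ F} := by
    intro e he f hf hcef
    by_contra hne
    have hwe : UArc.wout e ∈ F' := by
      rcases hsplit e with ⟨_, h⟩ | ⟨h, _⟩
      · exact h
      · exact (Set.disjoint_left.mp hd he h).elim
    have hwf : UArc.wout f ∈ F' := by
      rcases hsplit f with ⟨_, h⟩ | ⟨h, _⟩
      · exact h
      · exact (Set.disjoint_left.mp hd hf h).elim
    refine no_wout_disconnect color o slot hcF (color e) (fun g hg hgF => ?_)
    rcases hclass (color e) e f hne rfl hcef.symm g hg with rfl | rfl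
    · exact Set.disjoint_left.mp hd hgF hwe
    · exact Set.disjoint_left.mp hd hgF hwf
  -- the canonical vertex attached to each color vertex
  have hκ : ∀ c : C, ∃ v : V, ∀ f : E, color f = c → UArc.wout f ∈ F → (o f).2 = v := by
    intro c
    by_cases hex : ∃ e : E, color e = c ∧ UArc.wout e ∈ F
    · obtain ⟨e, hec, heF⟩ := hex
      exact ⟨(o e).2, fun f hfc hfF => by rw [hwuniq f e (by rw [hfc, hec]) hfF heF]⟩
    · exact ⟨r, fun f hfc hfF => absurd ⟨f, hfc, hfF⟩ hex⟩
  choose κ hκ using hκ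
  have hstepproj : ∀ x y, Step (uEnds color o slot) F x y →
      ReflTransGen (Step ends {e : E | UArc.img e ∈ F}) (proj r κ x) (proj r κ y) := by
    rintro x y ⟨a, haF, hends⟩
    have key : ReflTransGen (Step ends {e : E | UArc.img e ∈ F})
        (proj r κ (arcTail color o slot a)) (proj r κ (arcHead color o slot a)) := by
      cases a with
      | par v i b => exact .refl
      | img f =>
        simp only [arcTail, arcHead, proj_toOut, proj_toIn]
        exact ReflTransGen.single ⟨f, haF, (ho f).symm⟩
      | wout f =>
        have h1 : proj r κ (arcTail color o slot (UArc.wout f)) = κ (color f) := rfl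
        have h2 : proj r κ (arcHead color o slot (UArc.wout f)) = (o f).2 := proj_toIn κ _ _
        rw [h1, h2, hκ (color f) f rfl haF]
      | loop c' b => exact .refl
    rcases Sym2.eq_iff.mp hends with ⟨h1, h2⟩ | ⟨h1, h2⟩
    · rw [← h1, ← h2]; exact key
    · rw [← h1, ← h2]
      exact rtg_step_symm key
  have hconnS : Connects ends {e : E | UArc.img e ∈ F} := by
    intro a b
    have h := rtg_map_lift (proj r κ) hstepproj (hcF (toOut r a) (toOut r b))
    rwa [proj_toOut, proj_toOut] at h
  exact ⟨hconnS, hrainbow⟩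
end Dside


/-- With `G` and `D` as above: if `A` can be partitioned into two
weakly connected spanning subgraphs such that every vertex `u ∈ U - r` has positive
in-degree in both of them, then the edge set of `G` can be partitioned into two rainbow
spanning trees. -/
theorem rainbow_of_digraph_decomposition {V E C : Type*} [DecidableEq V] [Fintype V] [Fintype E] [Fintype C]
    (ends : E → Sym2 V) (color : E → C) (r : V)
    (T₁ T₂ : Set E) (hU : T₁ ∪ T₂ = Set.univ) (hD : Disjoint T₁ T₂)
    (h₁ : IsSpanningTree ends T₁) (h₂ : IsSpanningTree ends T₂)
    (hcol : ∀ c : C, {e : E | color e = c}.ncard = 2)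
    (o : E → V × V) (ho : ∀ e : E, s((o e).1, (o e).2) = ends e)
    (hr : {e : E | (o e).2 = r} = ∅)
    (hv : ∀ v : V, v ≠ r → {e : E | (o e).2 = v}.ncard = 2)
    (slot : E → Fin 2)
    (hslot : ∀ e f : E, (o e).2 = (o f).2 → slot e = slot f → e = f)
    (hdec : ∃ F₁ F₂ : Set (UArc V E C r), F₁ ∪ F₂ = Set.univ ∧ Disjoint F₁ F₂ ∧
      Connects (uEnds color o slot) F₁ ∧ Connects (uEnds color o slot) F₂ ∧
      (∀ u : UVtx V C r, u ≠ UVtx.root → ∃ a ∈ F₁, arcHead color o slot a = u) ∧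
      (∀ u : UVtx V C r, u ≠ UVtx.root → ∃ a ∈ F₂, arcHead color o slot a = u)) :
    ∃ S₁ S₂ : Set E, S₁ ∪ S₂ = Set.univ ∧ Disjoint S₁ S₂ ∧
      IsSpanningTree ends S₁ ∧ IsSpanningTree ends S₂ ∧ Rainbow color S₁ ∧ Rainbow color S₂ := by
  classical
  haveI : Nonempty V := ⟨r⟩
  obtain ⟨F₁, F₂, hFu, hFd, hcn₁, hcn₂, hd₁, hd₂⟩ := hdec
  obtain ⟨hS₁conn, hS₁rb⟩ :=
    main_aux ends color hcol o ho hr slot hslot F₁ F₂ hFu hFd hcn₁ hcn₂ hd₁ hd₂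
  obtain ⟨hS₂conn, hS₂rb⟩ :=
    main_aux ends color hcol o ho hr slot hslot F₂ F₁
      (by rw [Set.union_comm]; exact hFu) hFd.symm hcn₂ hcn₁ hd₂ hd₁
  set S₁ := {e : E | UArc.img e ∈ F₁} with hS₁
  set S₂ := {e : E | UArc.img e ∈ F₂} with hS₂
  have hSu : S₁ ∪ S₂ = Set.univ := by
    ext e
    simp only [Set.mem_union, hS₁, hS₂, Set.mem_setOf_eq, Set.mem_univ, iff_true]
    have : UArc.img e ∈ F₁ ∪ F₂ := by rw [hFu]; exact Set.mem_univ _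
    exact this
  have hSd : Disjoint S₁ S₂ := by
    rw [Set.disjoint_left]
    intro e he1 he2
    exact Set.disjoint_left.mp hFd he1 he2
  have ht₁ := isSpanningTree_ncard ends h₁
  have ht₂ := isSpanningTree_ncard ends h₂
  have hET : T₁.ncard + T₂.ncard = (Set.univ : Set E).ncard := by
    rw [← hU, Set.ncard_union_eq hD T₁.toFinite T₂.toFinite]
  have hES : S₁.ncard + S₂.ncard = (Set.univ : Set E).ncard := by
    rw [← hSu, Set.ncard_union_eq hSd S₁.toFinite S₂.toFinite]
  have hl₁ := connects_card_le ends hS₁conn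
  have hl₂ := connects_card_le ends hS₂conn
  have hc₁' : S₁.ncard + 1 = Fintype.card V := by omega
  have hc₂' : S₂.ncard + 1 = Fintype.card V := by omega
  exact ⟨S₁, S₂, hSu, hSd, isSpanningTree_of_connects_ncard ends hS₁conn hc₁',
    isSpanningTree_of_connects_ncard ends hS₂conn hc₂', hS₁rb, hS₂rb⟩

end DigraphStmt8
end

section
/- Let G=(V,E) be an edge-colored graph in which each color class contains exactly two edges, and let G'=(V',E') be the graph constructed from G. If the edge set of G is the disjoint union of two spanning trees, then the edge set of G' is the disjoint union of two spanning trees. -/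
namespace ParityStmt10

/-- An edge of the multigraph connects via set `F`. -/
def Step {V E : Type*} (ends : E → Sym2 V) (F : Set E) (a b : V) : Prop :=
  ∃ e ∈ F, ends e = s(a, b)

/-- The edge set `F` connects the whole multigraph with endpoint map `ends`. -/
def Connects {V E : Type*} (ends : E → Sym2 V) (F : Set E) : Prop :=
  ∀ a b : V, Relation.ReflTransGen (Step ends F) a b

/-- `F` is a spanning tree: it connects all vertices, minimally so. -/
def IsSpanningTree {V E : Type*} (ends : E → Sym2 V) (F : Set E) : Prop :=
  Connects ends F ∧ ∀ e ∈ F, ¬ Connects ends (F \ {e})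

/-- `F` is rainbow: each color class contains at most one edge of `F`. -/
def Rainbow {E C : Type*} (color : E → C) (F : Set E) : Prop :=
  ∀ e ∈ F, ∀ f ∈ F, color e = color f → e = f

/-- The endpoint map of the graph `G' = (V', E')` obtained from the edge-colored graph
`G` (with endpoint map `ends` and coloring `color`) by adding, for each color `c`, a new
vertex `w_c = Sum.inr c`, and for each edge `e` of color `c` a new edge `Sum.inr e`
joining `w_c` to the chosen endpoint `att e` of `e`.  Original edges of `G` are the edges
`Sum.inl e` of `G'`, and original vertices of `G` are the vertices `Sum.inl v` of `V'`. -/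
def endsExt {V E C : Type*} (ends : E → Sym2 V) (color : E → C) (att : E → V) :
    E ⊕ E → Sym2 (V ⊕ C)
  | .inl e => (ends e).map Sum.inl
  | .inr e => s(Sum.inl (att e), Sum.inr (color e))

/-- `X ⊆ E'` is a parity set: it is a union of the pairs `{e, e_c}`, i.e. it contains the
edge `e` of `G` if and only if it contains the corresponding new edge `e_c`. -/
def IsParity {E : Type*} (X : Set (E ⊕ E)) : Prop :=
  ∀ e : E, Sum.inl e ∈ X ↔ Sum.inr e ∈ X

lemma sym2_exists {V : Type*} (z : Sym2 V) : ∃ a b, z = s(a, b) :=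
  Sym2.ind (fun a b => ⟨a, b, rfl⟩) z

lemma step_symm {V E : Type*} (ends : E → Sym2 V) (F : Set E) :
    Symmetric (Step ends F) := by
  rintro a b ⟨e, he, hab⟩
  exact ⟨e, he, by rw [hab, Sym2.eq_swap]⟩

lemma key {V E C : Type*} (ends : E → Sym2 V) (color : E → C) (att : E → V)
    (T S : Set E) (hT : IsSpanningTree ends T)
    (hS : ∀ c : C, ∃! e, e ∈ S ∧ color e = c) :
    IsSpanningTree (endsExt ends color att) (Sum.inl '' T ∪ Sum.inr '' S) := by
  set F : Set (E ⊕ E) := Sum.inl '' T ∪ Sum.inr '' S with hF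
  have hmemL : ∀ f : E, Sum.inl f ∈ F ↔ f ∈ T := by intro f; simp [hF]
  have hmemR : ∀ f : E, Sum.inr f ∈ F ↔ f ∈ S := by intro f; simp [hF]
  have lift : ∀ a b : V, Relation.ReflTransGen (Step ends T) a b →
      Relation.ReflTransGen (Step (endsExt ends color att) F) (Sum.inl a) (Sum.inl b) := by
    intro a b h
    refine Relation.ReflTransGen.lift Sum.inl ?_ _ _ h
    rintro x y ⟨e, he, hxy⟩
    exact ⟨Sum.inl e, (hmemL e).2 he, by simp [endsExt, hxy]⟩
  have hwc : ∀ c : C, Relation.ReflTransGen (Step (endsExt ends color att) F)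
      (Sum.inr c) (Sum.inl (att (hS c).choose)) := by
    intro c
    obtain ⟨⟨heS, hec⟩, -⟩ := (hS c).choose_spec
    refine Relation.ReflTransGen.single ⟨Sum.inr (hS c).choose, (hmemR _).2 heS, ?_⟩
    rw [show endsExt ends color att (Sum.inr (hS c).choose)
      = s(Sum.inl (att (hS c).choose), Sum.inr (color (hS c).choose)) from rfl, hec,
      Sym2.eq_swap]
  have hsymm : ∀ {x y : V ⊕ C}, Relation.ReflTransGen (Step (endsExt ends color att) F) x y →
      Relation.ReflTransGen (Step (endsExt ends color att) F) y x := by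
    haveI : Std.Symm (Step (endsExt ends color att) F) := ⟨step_symm (endsExt ends color att) F⟩
    intro x y h
    exact Std.Symm.symm (r := Relation.ReflTransGen (Step (endsExt ends color att) F)) x y h
  have hconn : Connects (endsExt ends color att) F := by
    have toV : ∀ x : V ⊕ C, ∃ v : V,
        Relation.ReflTransGen (Step (endsExt ends color att) F) x (Sum.inl v) := by
      rintro (v | c)
      · exact ⟨v, .refl⟩
      · exact ⟨_, hwc c⟩
    intro x y
    obtain ⟨vx, hx⟩ := toV x
    obtain ⟨vy, hy⟩ := toV y
    exact hx.trans ((lift vx vy (hT.1 vx vy)).trans (hsymm hy))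
  refine ⟨hconn, ?_⟩
  rintro (e | e) hf hcon
  · -- removing an old edge
    have heT : e ∈ T := (hmemL e).1 hf
    set proj : V ⊕ C → V := fun x => match x with
      | .inl v => v
      | .inr c => att (hS c).choose with hproj
    have stepproj : ∀ x y, Step (endsExt ends color att) (F \ {Sum.inl e}) x y →
        Relation.ReflTransGen (Step ends (T \ {e})) (proj x) (proj y) := by
      rintro x y ⟨(f | f), ⟨hfF, hfne⟩, hxy⟩
      · have hfT : f ∈ T := (hmemL f).1 hfF
        have hfe : f ≠ e := by
          intro h; exact hfne (by simp [h])
        obtain ⟨a, b, hab⟩ := sym2_exists (ends f)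
        have hq : s(Sum.inl a, Sum.inl b) = s(x, y) := by
          rw [← hxy, show endsExt ends color att (Sum.inl f) = (ends f).map Sum.inl from rfl,
            hab, Sym2.map_pair_eq]
        rw [Sym2.eq_iff] at hq
        rcases hq with ⟨hx, hy⟩ | ⟨hx, hy⟩ <;> subst hx <;> subst hy
        · exact .single ⟨f, ⟨hfT, hfe⟩, hab⟩
        · exact .single ⟨f, ⟨hfT, hfe⟩, by rw [hab, Sym2.eq_swap]⟩
      · have hfS : f ∈ S := (hmemR f).1 hfF
        have hfchoose : f = (hS (color f)).choose :=
          ((hS (color f)).choose_spec.2 f ⟨hfS, rfl⟩)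
        have hq : s(Sum.inl (att f), Sum.inr (color f)) = s(x, y) := hxy
        have hpr : proj (Sum.inr (color f)) = proj (Sum.inl (att f)) := by
          show att (hS (color f)).choose = att f
          exact congrArg att hfchoose.symm
        rw [Sym2.eq_iff] at hq
        rcases hq with ⟨hx, hy⟩ | ⟨hx, hy⟩ <;> subst hx <;> subst hy
        · rw [hpr]
        · rw [hpr]
    have hcon' : Connects ends (T \ {e}) := by
      have main : ∀ x y, Relation.ReflTransGen
          (Step (endsExt ends color att) (F \ {Sum.inl e})) x y →
          Relation.ReflTransGen (Step ends (T \ {e})) (proj x) (proj y) := by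
        intro x y h
        induction h with
        | refl => exact .refl
        | tail _ h2 ih => exact ih.trans (stepproj _ _ h2)
      intro a b
      simpa using main _ _ (hcon (Sum.inl a) (Sum.inl b))
    exact hT.2 e heT hcon'
  · -- removing a new edge
    have heS : e ∈ S := (hmemR e).1 hf
    have h := (hcon (Sum.inr (color e)) (Sum.inl (att e))).cases_head
    rcases h with h | ⟨z, ⟨(f | f), ⟨hfF, hfne⟩, hxy⟩, -⟩
    · simp at h
    · obtain ⟨a, b, hab⟩ := sym2_exists (ends f)
      have hq : s(Sum.inl a, Sum.inl b) = s(Sum.inr (color e), z) := by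
        rw [← hxy, show endsExt ends color att (Sum.inl f) = (ends f).map Sum.inl from rfl,
          hab, Sym2.map_pair_eq]
      rw [Sym2.eq_iff] at hq
      rcases hq with ⟨h1, -⟩ | ⟨-, h1⟩ <;> simp at h1
    · have hfS : f ∈ S := (hmemR f).1 hfF
      have hq : s(Sum.inl (att f), Sum.inr (color f)) = s(Sum.inr (color e), z) := hxy
      rw [Sym2.eq_iff] at hq
      rcases hq with ⟨h1, -⟩ | ⟨-, h1⟩
      · simp at h1
      · have hcf : color f = color e := by simpa using h1
        have h2 : f = (hS (color e)).choose := (hS (color e)).choose_spec.2 f ⟨hfS, hcf⟩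
        have h3 : e = (hS (color e)).choose := (hS (color e)).choose_spec.2 e ⟨heS, rfl⟩
        exact hfne (by rw [show f = e from h2.trans h3.symm]; rfl)


/-- Let `G = (V, E)` be a finite edge-colored graph in which each color
class contains exactly two edges, and let `G' = (V', E')` be the graph constructed from
`G` (where `att e` is the chosen endpoint of `e` to which the new edge `e_c` is
attached).  If the edge set of `G` is the disjoint union of two spanning trees, then the
edge set of `G'` is the disjoint union of two spanning trees. -/
theorem extension_two_spanning_trees {V E C : Type*} [Fintype V] [Fintype E] [Fintype C]
    (ends : E → Sym2 V) (color : E → C) (att : E → V)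
    (hcol : ∀ c : C, {e : E | color e = c}.ncard = 2)
    (hatt : ∀ e : E, att e ∈ ends e)
    (h : ∃ T₁ T₂ : Set E, T₁ ∪ T₂ = Set.univ ∧ Disjoint T₁ T₂ ∧
      IsSpanningTree ends T₁ ∧ IsSpanningTree ends T₂) :
    ∃ T₁' T₂' : Set (E ⊕ E), T₁' ∪ T₂' = Set.univ ∧ Disjoint T₁' T₂' ∧
      IsSpanningTree (endsExt ends color att) T₁' ∧
      IsSpanningTree (endsExt ends color att) T₂' := by
  classical
  obtain ⟨T₁, T₂, huniv, hdisj, h1, h2⟩ := h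
  have hpick : ∀ c : C, ∃ e : E, color e = c := by
    intro c
    obtain ⟨e, he⟩ := Set.nonempty_of_ncard_ne_zero (s := {e : E | color e = c})
      (by rw [hcol c]; norm_num)
    exact ⟨e, he⟩
  choose pick hpickc using hpick
  set S : Set E := {e | pick (color e) = e} with hSdef
  have hS1 : ∀ c : C, ∃! e, e ∈ S ∧ color e = c := by
    intro c
    refine ⟨pick c, ⟨?_, hpickc c⟩, ?_⟩
    · show pick (color (pick c)) = pick c
      rw [hpickc c]
    · rintro e ⟨heS, hec⟩
      have : pick (color e) = e := heS
      rw [hec] at this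
      exact this.symm
  have hS2 : ∀ c : C, ∃! e, e ∈ Sᶜ ∧ color e = c := by
    intro c
    obtain ⟨a, b, hab, hset⟩ := Set.ncard_eq_two.1 (hcol c)
    have hca : color a = c := by
      have : a ∈ {e : E | color e = c} := by rw [hset]; simp
      exact this
    have hcb : color b = c := by
      have : b ∈ {e : E | color e = c} := by rw [hset]; simp
      exact this
    have hpc : pick c ∈ ({a, b} : Set E) := by rw [← hset]; exact hpickc c
    set other : E := if pick c = a then b else a with hother
    have hoc : color other = c := by
      rw [hother]; split <;> assumption
    have hone : other ≠ pick c := by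
      rw [hother]; split
      · rename_i hh; rw [hh]; exact hab.symm
      · rename_i hh
        rcases hpc with h' | h'
        · exact absurd h'.symm (by intro hx; exact hh hx.symm)
        · intro hx; rw [← hx] at h'; exact hab (h'.symm ▸ rfl)
    refine ⟨other, ⟨?_, hoc⟩, ?_⟩
    · show ¬ pick (color other) = other
      rw [hoc]
      exact fun hx => hone hx.symm
    · rintro e ⟨heS, hec⟩
      have hepc : e ≠ pick c := by
        intro hx
        apply heS
        show pick (color e) = e
        rw [hec, ← hx]
      have he : e ∈ ({a, b} : Set E) := by rw [← hset]; exact hec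
      rw [hother]
      by_cases hpa : pick c = a
      · rcases he with h' | h'
        · exact absurd (h'.trans hpa.symm) hepc
        · rw [if_pos hpa]; simpa using h'
      · have hpb : pick c = b := by
          rcases hpc with h' | h'
          · exact absurd h' hpa
          · exact h'
        rcases he with h' | h'
        · rw [if_neg hpa]; simpa using h'
        · exact absurd (h'.trans hpb.symm) hepc
  refine ⟨Sum.inl '' T₁ ∪ Sum.inr '' S, Sum.inl '' T₂ ∪ Sum.inr '' Sᶜ, ?_, ?_,
    key ends color att T₁ S h1 hS1, key ends color att T₂ Sᶜ h2 hS2⟩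
  · ext (f | f)
    · have : f ∈ T₁ ∪ T₂ := huniv ▸ Set.mem_univ f
      simpa using (by rcases this with h' | h' <;> [left; right] <;> exact h' :
        f ∈ T₁ ∨ f ∈ T₂)
    · simp [em (f ∈ S)]
  · rw [Set.disjoint_left]
    rintro (f | f) hf hg
    · have hf1 : f ∈ T₁ := by simpa using hf
      have hf2 : f ∈ T₂ := by simpa using hg
      exact Set.disjoint_left.1 hdisj hf1 hf2
    · have hf1 : f ∈ S := by simpa using hf
      have hf2 : f ∈ Sᶜ := by simpa using hg
      exact hf2 hf1
end ParityStmt10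
end

section
/- Let G=(V,E) be an edge-colored graph. Then G contains a rainbow spanning tree if and only if for every partition 𝒫 of V into nonempty classes, the set of edges joining different classes of 𝒫 meets at least |𝒫|−1 distinct color classes. -/
namespace RainbowTreeCriterion

/-- An edge of the multigraph connects via set `F`. -/
def Step {V E : Type*} (ends : E → Sym2 V) (F : Set E) (a b : V) : Prop :=
  ∃ e ∈ F, ends e = s(a, b)

/-- The edge set `F` connects the whole multigraph with endpoint map `ends`. -/
def Connects {V E : Type*} (ends : E → Sym2 V) (F : Set E) : Prop :=
  ∀ a b : V, Relation.ReflTransGen (Step ends F) a b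

/-- `F` is a spanning tree: it connects all vertices, minimally so. -/
def IsSpanningTree {V E : Type*} (ends : E → Sym2 V) (F : Set E) : Prop :=
  Connects ends F ∧ ∀ e ∈ F, ¬ Connects ends (F \ {e})

/-- `F` is rainbow: each color class contains at most one edge of `F`. -/
def Rainbow {E C : Type*} (color : E → C) (F : Set E) : Prop :=
  ∀ e ∈ F, ∀ f ∈ F, color e = color f → e = f

section Infra

variable {V E : Type*} (ends : E → Sym2 V)

/-- Connectivity relation via edge set `F`. -/
def Conn (F : Set E) (a b : V) : Prop := Relation.ReflTransGen (Step ends F) a b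

variable {ends}

lemma step_symm {F : Set E} {a b : V} (h : Step ends F a b) : Step ends F b a := by
  obtain ⟨e, he, hE⟩ := h
  exact ⟨e, he, by rw [hE, Sym2.eq_swap]⟩

lemma conn_refl (F : Set E) (a : V) : Conn ends F a a := Relation.ReflTransGen.refl

lemma conn_symm {F : Set E} {a b : V} (h : Conn ends F a b) : Conn ends F b a :=
  (@Relation.ReflTransGen.symmetric _ _ ⟨fun _ _ hs => step_symm hs⟩).symm _ _ h

lemma conn_trans {F : Set E} {a b c : V} (h : Conn ends F a b) (h' : Conn ends F b c) :
    Conn ends F a c := Relation.ReflTransGen.trans h h'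

lemma conn_mono {F F' : Set E} (hFF : F ⊆ F') {a b : V} (h : Conn ends F a b) :
    Conn ends F' a b := by
  refine Relation.ReflTransGen.mono ?_ _ _ h
  rintro x y ⟨e, he, hE⟩
  exact ⟨e, hFF he, hE⟩

variable (ends)

/-- The setoid of connectivity. -/
def connSetoid (F : Set E) : Setoid V :=
  ⟨Conn ends F, fun _ => conn_refl F _, conn_symm, conn_trans⟩

/-- Number of connected components. -/
noncomputable def ncomp (F : Set E) : ℕ := Nat.card (Quotient (connSetoid ends F))

variable {ends}

lemma ncomp_le_of_subset [Finite V] {F F' : Set E} (h : F ⊆ F') :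
    ncomp ends F' ≤ ncomp ends F := by
  refine Nat.card_le_card_of_surjective
    (Quotient.map (fun v => v) (fun a b hab => conn_mono h hab)) ?_
  rintro ⟨a⟩
  exact ⟨Quotient.mk _ a, rfl⟩

lemma conn_insert_cases {F : Set E} {e : E} {x y a b : V} (hxy : ends e = s(x, y))
    (h : Conn ends (insert e F) a b) :
    Conn ends F a b ∨ (Conn ends F a x ∧ Conn ends F y b) ∨
      (Conn ends F a y ∧ Conn ends F x b) := by
  induction h with
  | refl => exact Or.inl (conn_refl F a)
  | tail _ hstep ih =>
    rename_i c d _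
    obtain ⟨g, hg, hE⟩ := hstep
    rcases hg with rfl | hg
    · -- the step uses edge e
      rw [hxy] at hE
      rcases Sym2.eq_iff.mp hE with ⟨rfl, rfl⟩ | ⟨rfl, rfl⟩
      · -- c = x, d = y
        rcases ih with h1 | ⟨h1, h2⟩ | ⟨h1, h2⟩
        · exact Or.inr (Or.inl ⟨h1, conn_refl F y⟩)
        · exact Or.inr (Or.inl ⟨h1, conn_refl F y⟩)
        · exact Or.inl h1
      · -- c = y, d = x
        rcases ih with h1 | ⟨h1, h2⟩ | ⟨h1, h2⟩
        · exact Or.inr (Or.inr ⟨h1, conn_refl F x⟩)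
        · exact Or.inl h1
        · exact Or.inr (Or.inr ⟨h1, conn_refl F x⟩)
    · -- the step uses an edge of F
      have hs : Conn ends F c d := Relation.ReflTransGen.single ⟨g, hg, hE⟩
      rcases ih with h1 | ⟨h1, h2⟩ | ⟨h1, h2⟩
      · exact Or.inl (conn_trans h1 hs)
      · exact Or.inr (Or.inl ⟨h1, conn_trans h2 hs⟩)
      · exact Or.inr (Or.inr ⟨h1, conn_trans h2 hs⟩)

lemma connSetoid_insert_of_conn {F : Set E} {e : E} {x y : V} (hxy : ends e = s(x, y))
    (h : Conn ends F x y) : connSetoid ends (insert e F) = connSetoid ends F := by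
  apply Setoid.ext
  intro a b
  constructor
  · intro hab
    rcases conn_insert_cases hxy hab with h1 | ⟨h1, h2⟩ | ⟨h1, h2⟩
    · exact h1
    · exact conn_trans (conn_trans h1 h) h2
    · exact conn_trans (conn_trans h1 (conn_symm h)) h2
  · exact conn_mono (Set.subset_insert e F)

lemma ncomp_insert_of_conn {F : Set E} {e : E} {x y : V} (hxy : ends e = s(x, y))
    (h : Conn ends F x y) : ncomp ends (insert e F) = ncomp ends F := by
  unfold ncomp
  rw [connSetoid_insert_of_conn hxy h]

lemma ncomp_insert_of_not_conn [Finite V] {F : Set E} {e : E} {x y : V}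
    (hxy : ends e = s(x, y)) (h : ¬ Conn ends F x y) :
    ncomp ends F = ncomp ends (insert e F) + 1 := by
  classical
  set QX := Quotient (connSetoid ends F)
  have key : ∀ a b : V, Conn ends (insert e F) a b →
      (if (Quotient.mk (connSetoid ends F) a) = Quotient.mk _ y then
        Quotient.mk (connSetoid ends F) x else Quotient.mk _ a) =
      (if (Quotient.mk (connSetoid ends F) b) = Quotient.mk _ y then
        Quotient.mk (connSetoid ends F) x else Quotient.mk _ b) := by
    intro a b hab
    have hxyne : (Quotient.mk (connSetoid ends F) x) ≠ Quotient.mk _ y := by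
      intro hq; exact h (Quotient.exact hq)
    rcases conn_insert_cases hxy hab with h1 | ⟨h1, h2⟩ | ⟨h1, h2⟩
    · rw [Quotient.sound h1]
    · have ha : Quotient.mk (connSetoid ends F) a = Quotient.mk _ x := Quotient.sound h1
      have hb : Quotient.mk (connSetoid ends F) b = Quotient.mk _ y :=
        Quotient.sound (conn_symm h2)
      rw [ha, hb, if_neg hxyne, if_pos rfl]
    · have ha : Quotient.mk (connSetoid ends F) a = Quotient.mk _ y := Quotient.sound h1
      have hb : Quotient.mk (connSetoid ends F) b = Quotient.mk _ x :=
        Quotient.sound (conn_symm h2)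
      rw [ha, hb, if_pos rfl, if_neg hxyne]
  let G : Quotient (connSetoid ends (insert e F)) →
      {q : QX // q ≠ Quotient.mk (connSetoid ends F) y} :=
    Quotient.lift (fun a => ⟨if (Quotient.mk (connSetoid ends F) a) = Quotient.mk _ y then
        Quotient.mk (connSetoid ends F) x else Quotient.mk _ a, by
      split
      · intro hq; exact h (Quotient.exact hq)
      · assumption⟩)
      (fun a b hab => Subtype.ext (key a b hab))
  have hGbij : Function.Bijective G := by
    constructor
    · rintro ⟨a⟩ ⟨b⟩ hab
      have hab' := congrArg Subtype.val hab
      simp only [G, Quotient.lift_mk] at hab'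
      apply Quotient.sound
      have estep : Conn ends (insert e F) x y :=
        Relation.ReflTransGen.single ⟨e, Set.mem_insert e F, hxy⟩
      split_ifs at hab' with h1 h2 h2
      · -- a ~ y, b ~ y
        have := conn_trans (Quotient.exact (h1 : _)) (conn_symm (Quotient.exact (h2 : _)))
        exact (conn_mono (Set.subset_insert e F) this : Conn ends (insert e F) a b)
      · -- a ~ y, x = b-class
        have hay : Conn ends F a y := Quotient.exact h1
        have hxb : Conn ends F x b := Quotient.exact hab'
        exact conn_trans (conn_mono (Set.subset_insert e F) hay)
          (conn_trans (conn_symm estep) (conn_mono (Set.subset_insert e F) hxb))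
      · -- b ~ y, a-class = x
        have hax : Conn ends F a x := Quotient.exact hab'
        have hby : Conn ends F b y := Quotient.exact h2
        exact conn_trans (conn_mono (Set.subset_insert e F) hax)
          (conn_trans estep (conn_symm (conn_mono (Set.subset_insert e F) hby)))
      · exact conn_mono (Set.subset_insert e F) (Quotient.exact hab')
    · rintro ⟨q, hq⟩
      obtain ⟨a, rfl⟩ := Quotient.exists_rep q
      refine ⟨Quotient.mk _ a, ?_⟩
      apply Subtype.ext
      simp only [G, Quotient.lift_mk]
      exact if_neg hq
  have hcard : ncomp ends (insert e F) =
      Nat.card {q : QX // q ≠ Quotient.mk (connSetoid ends F) y} :=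
    Nat.card_eq_of_bijective G hGbij
  have hsum : Nat.card QX =
      Nat.card {q : QX // q = Quotient.mk (connSetoid ends F) y} +
      Nat.card {q : QX // q ≠ Quotient.mk (connSetoid ends F) y} := by
    classical
    rw [← Nat.card_sum]
    exact (Nat.card_congr (Equiv.sumCompl (fun q : QX => q = Quotient.mk (connSetoid ends F) y))).symm
  haveI : Unique {q : QX // q = Quotient.mk (connSetoid ends F) y} :=
    ⟨⟨⟨Quotient.mk _ y, rfl⟩⟩, by rintro ⟨_, rfl⟩; rfl⟩
  rw [show Nat.card {q : QX // q = Quotient.mk (connSetoid ends F) y} = 1 from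
    Nat.card_unique] at hsum
  have goal : Nat.card QX = ncomp ends (insert e F) + 1 := by rw [hcard]; omega
  exact goal

lemma ncomp_le_insert [Finite V] (F : Set E) (e : E) :
    ncomp ends F ≤ ncomp ends (insert e F) + 1 := by
  obtain ⟨x, y, hxy⟩ : ∃ x y, ends e = s(x, y) := by
    induction (ends e) using Sym2.ind with
    | _ x y => exact ⟨x, y, rfl⟩
  by_cases h : Conn ends F x y
  · rw [ncomp_insert_of_conn hxy h]; omega
  · rw [ncomp_insert_of_not_conn hxy h]

lemma connects_iff_ncomp_le_one [Finite V] (F : Set E) :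
    Connects ends F ↔ ncomp ends F ≤ 1 := by
  constructor
  · intro h
    have : Subsingleton (Quotient (connSetoid ends F)) := by
      constructor
      rintro ⟨a⟩ ⟨b⟩
      exact Quotient.sound (h a b)
    exact Finite.card_le_one_iff_subsingleton.mpr this
  · intro h a b
    have : Subsingleton (Quotient (connSetoid ends F)) :=
      Finite.card_le_one_iff_subsingleton.mp h
    exact (Quotient.exact (Subsingleton.elim (Quotient.mk (connSetoid ends F) a)
      (Quotient.mk _ b)) : Conn ends F a b)

lemma ncomp_supermodular_aux [Finite V] [DecidableEq E] :
    ∀ (n : ℕ) (A B : Finset E), (B \ A).card ≤ n →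
      ncomp ends ↑A + ncomp ends ↑B ≤ ncomp ends ↑(A ∪ B) + ncomp ends ↑(A ∩ B) := by
  intro n
  induction n with
  | zero =>
    intro A B hAB
    have hsub : B ⊆ A := Finset.sdiff_eq_empty_iff_subset.mp (Finset.card_eq_zero.mp
      (Nat.le_zero.mp hAB))
    rw [Finset.union_eq_left.mpr hsub, Finset.inter_eq_right.mpr hsub]
  | succ n ih =>
    intro A B hAB
    by_cases hsub : B ⊆ A
    · rw [Finset.union_eq_left.mpr hsub, Finset.inter_eq_right.mpr hsub]
    · obtain ⟨e, heB, heA⟩ : ∃ e ∈ B, e ∉ A := by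
        by_contra hc
        push_neg at hc
        exact hsub hc
      set B' := B.erase e with hB'
      have hcard : (B' \ A).card ≤ n := by
        have hss : B' \ A ⊂ B \ A := by
          refine Finset.ssubset_iff_of_subset (Finset.sdiff_subset_sdiff
            (Finset.erase_subset e B) le_rfl) |>.mpr ?_
          exact ⟨e, Finset.mem_sdiff.mpr ⟨heB, heA⟩, fun hc =>
            (Finset.notMem_erase e B) (Finset.mem_sdiff.mp hc).1⟩
        have := Finset.card_lt_card hss
        omega
      have IH := ih A B' hcard
      have hBins : (↑B : Set E) = insert e ↑B' := by
        rw [hB', ← Finset.coe_insert, Finset.insert_erase heB]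
      have hUB : (↑(A ∪ B) : Set E) = insert e ↑(A ∪ B') := by
        rw [← Finset.coe_insert, ← Finset.union_insert, hB', Finset.insert_erase heB]
      have hIB : A ∩ B = A ∩ B' := by
        ext g
        simp only [Finset.mem_inter, hB', Finset.mem_erase]
        exact ⟨fun ⟨h1, h2⟩ => ⟨h1, fun hge => heA (hge ▸ h1), h2⟩, fun ⟨h1, _, h3⟩ => ⟨h1, h3⟩⟩
      obtain ⟨x, y, hxy⟩ : ∃ x y, ends e = s(x, y) := by
        induction (ends e) using Sym2.ind with
        | _ x y => exact ⟨x, y, rfl⟩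
      rw [hIB, hUB, hBins]
      by_cases hconn : Conn ends ↑(A ∪ B') x y
      · rw [ncomp_insert_of_conn hxy hconn]
        have h2 : ncomp ends (insert e ↑B') ≤ ncomp ends ↑B' :=
          ncomp_le_of_subset (Set.subset_insert e ↑B')
        omega
      · have hconn' : ¬ Conn ends ↑B' x y := fun hc =>
          hconn (conn_mono (by intro g hg; simp only [Finset.coe_union]; exact Set.mem_union_right _ hg) hc)
        have e1 := ncomp_insert_of_not_conn hxy hconn
        have e2 := ncomp_insert_of_not_conn hxy hconn'
        omega

lemma ncomp_supermodular [Finite V] [DecidableEq E] (A B : Finset E) :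
    ncomp ends ↑A + ncomp ends ↑B ≤ ncomp ends ↑(A ∪ B) + ncomp ends ↑(A ∩ B) :=
  ncomp_supermodular_aux _ A B le_rfl

lemma ncomp_sdiff_le [Finite V] [DecidableEq E] (S G : Finset E) :
    ncomp ends ↑(S \ G) ≤ ncomp ends ↑S + G.card := by
  induction G using Finset.induction_on with
  | empty => rw [Finset.sdiff_empty]; simp
  | insert _ _ hg ih =>
    rename_i g G
    have hsub : (↑(S \ G) : Set E) ⊆ insert g ↑(S \ insert g G) := by
      intro a ha
      simp only [Finset.coe_sdiff, Set.mem_diff, Finset.mem_coe] at ha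
      by_cases hag : a = g
      · exact Set.mem_insert_iff.mpr (Or.inl hag)
      · refine Set.mem_insert_iff.mpr (Or.inr ?_)
        simp only [Finset.coe_sdiff, Set.mem_diff, Finset.mem_coe, Finset.mem_insert]
        exact ⟨ha.1, fun hc => by rcases hc with hc | hc; exact hag hc; exact ha.2 hc⟩
    have h1 : ncomp ends ↑(S \ insert g G) ≤ ncomp ends (insert g ↑(S \ insert g G)) + 1 :=
      ncomp_le_insert _ _
    have h2 : ncomp ends (insert g ↑(S \ insert g G)) ≤ ncomp ends ↑(S \ G) :=
      ncomp_le_of_subset hsub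
    rw [Finset.card_insert_of_notMem hg]
    omega

lemma exists_spanning_tree_subset [Finite V] [Fintype E] {F : Finset E}
    (hF : Connects ends ↑F) : ∃ T : Finset E, ↑T ⊆ (↑F : Set E) ∧ IsSpanningTree ends ↑T := by
  classical
  set S := F.powerset.filter (fun F' : Finset E => Connects ends (↑F' : Set E)) with hS
  have hne : S.Nonempty := ⟨F, by simp [hS, Finset.mem_filter, Finset.mem_powerset, hF]⟩
  obtain ⟨T, hTS, hmin⟩ := S.exists_min_image (fun T => T.card) hne
  rw [hS, Finset.mem_filter, Finset.mem_powerset] at hTS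
  refine ⟨T, by exact_mod_cast Finset.coe_subset.mpr hTS.1, hTS.2, ?_⟩
  intro e he hconn
  rw [← Finset.coe_erase] at hconn
  have heT : e ∈ T := by exact_mod_cast he
  have hmem : T.erase e ∈ S := by
    rw [hS, Finset.mem_filter, Finset.mem_powerset]
    exact ⟨(Finset.erase_subset e T).trans hTS.1, hconn⟩
  have := hmin _ hmem
  have := Finset.card_erase_of_mem heT
  have : 1 ≤ T.card := Finset.card_pos.mpr ⟨e, heT⟩
  omega

end Infra

section Rado

variable {V E C : Type*} {ends : E → Sym2 V} {color : E → C}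

lemma rado_aux [Finite V] [DecidableEq E] [DecidableEq C] :
    ∀ (n : ℕ) (E' : Finset E), E'.card ≤ n →
      (∀ J : Finset C, J ⊆ E'.image color →
        ncomp ends ↑(E'.filter (fun e => color e ∈ J)) + J.card ≤ (E'.image color).card + 1) →
      ∃ F : Finset E, F ⊆ E' ∧ Connects ends ↑F ∧
        (∀ e ∈ F, ∀ f ∈ F, color e = color f → e = f) := by
  intro n
  induction n with
  | zero =>
    intro E' hcard hcond
    have hE' : E' = ∅ := Finset.card_eq_zero.mp (Nat.le_zero.mp hcard)
    subst hE'
    refine ⟨∅, le_rfl, ?_, by simp⟩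
    apply (connects_iff_ncomp_le_one _).mpr
    have := hcond ∅ (by simp)
    simpa using this
  | succ n ih =>
    intro E' hcard hcond
    by_cases hrb : ∀ e ∈ E', ∀ f ∈ E', color e = color f → e = f
    · refine ⟨E', le_rfl, ?_, hrb⟩
      apply (connects_iff_ncomp_le_one _).mpr
      have h1 := hcond (E'.image color) le_rfl
      have hfil : E'.filter (fun e => color e ∈ E'.image color) = E' :=
        Finset.filter_true_of_mem (fun e he => Finset.mem_image_of_mem color he)
      have hcards : (E'.image color).card = E'.card :=
        Finset.card_image_of_injOn (fun x hx y hy hxy => hrb x hx y hy hxy)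
      rw [hfil, hcards] at h1
      omega
    · push_neg at hrb
      obtain ⟨e, heE, f, hfE, hcef, hef⟩ := hrb
      have husede : (E'.erase e).image color = E'.image color := by
        apply Finset.Subset.antisymm (Finset.image_subset_image (Finset.erase_subset e E'))
        intro c hc
        obtain ⟨g, hg, rfl⟩ := Finset.mem_image.mp hc
        by_cases hge : g = e
        · subst hge
          exact Finset.mem_image.mpr ⟨f, Finset.mem_erase.mpr ⟨fun h => hef h.symm, hfE⟩,
            hcef.symm⟩
        · exact Finset.mem_image.mpr ⟨g, Finset.mem_erase.mpr ⟨hge, hg⟩, rfl⟩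
      have husedf : (E'.erase f).image color = E'.image color := by
        apply Finset.Subset.antisymm (Finset.image_subset_image (Finset.erase_subset f E'))
        intro c hc
        obtain ⟨g, hg, rfl⟩ := Finset.mem_image.mp hc
        by_cases hgf : g = f
        · subst hgf
          exact Finset.mem_image.mpr ⟨e, Finset.mem_erase.mpr ⟨hef, heE⟩, hcef⟩
        · exact Finset.mem_image.mpr ⟨g, Finset.mem_erase.mpr ⟨hgf, hg⟩, rfl⟩
      have key : (∀ J : Finset C, J ⊆ (E'.erase e).image color →
            ncomp ends ↑((E'.erase e).filter (fun g => color g ∈ J)) + J.card ≤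
              ((E'.erase e).image color).card + 1) ∨
          (∀ J : Finset C, J ⊆ (E'.erase f).image color →
            ncomp ends ↑((E'.erase f).filter (fun g => color g ∈ J)) + J.card ≤
              ((E'.erase f).image color).card + 1) := by
        by_contra hc
        push_neg at hc
        obtain ⟨⟨J₁, hJ₁sub, hJ₁⟩, ⟨J₂, hJ₂sub, hJ₂⟩⟩ := hc
        rw [husede] at hJ₁sub hJ₁
        rw [husedf] at hJ₂sub hJ₂
        have hceJ₁ : color e ∈ J₁ := by
          by_contra hcc
          have heq : (E'.erase e).filter (fun g => color g ∈ J₁) =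
              E'.filter (fun g => color g ∈ J₁) := by
            ext g
            simp only [Finset.mem_filter, Finset.mem_erase]
            constructor
            · rintro ⟨⟨_, h2⟩, h3⟩; exact ⟨h2, h3⟩
            · rintro ⟨h1, h2⟩
              refine ⟨⟨?_, h1⟩, h2⟩
              rintro rfl; exact hcc h2
          rw [heq] at hJ₁
          have := hcond J₁ hJ₁sub
          omega
        have hceJ₂ : color e ∈ J₂ := by
          by_contra hcc
          have heq : (E'.erase f).filter (fun g => color g ∈ J₂) =
              E'.filter (fun g => color g ∈ J₂) := by
            ext g
            simp only [Finset.mem_filter, Finset.mem_erase]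
            constructor
            · rintro ⟨⟨_, h2⟩, h3⟩; exact ⟨h2, h3⟩
            · rintro ⟨h1, h2⟩
              refine ⟨⟨?_, h1⟩, h2⟩
              rintro rfl; rw [← hcef] at h2; exact hcc h2
          rw [heq] at hJ₂
          have := hcond J₂ hJ₂sub
          omega
        set A := (E'.erase e).filter (fun g => color g ∈ J₁) with hA
        set B := (E'.erase f).filter (fun g => color g ∈ J₂) with hB
        have hUnion : A ∪ B = E'.filter (fun g => color g ∈ J₁ ∪ J₂) := by
          ext g
          simp only [hA, hB, Finset.mem_union, Finset.mem_filter, Finset.mem_erase]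
          constructor
          · rintro (⟨⟨_, h2⟩, h3⟩ | ⟨⟨_, h2⟩, h3⟩)
            · exact ⟨h2, Or.inl h3⟩
            · exact ⟨h2, Or.inr h3⟩
          · rintro ⟨h1, h2⟩
            rcases h2 with h3 | h3
            · by_cases hge : g = e
              · subst hge
                exact Or.inr ⟨⟨hef, h1⟩, hceJ₂⟩
              · exact Or.inl ⟨⟨hge, h1⟩, h3⟩
            · by_cases hgf : g = f
              · subst hgf
                exact Or.inl ⟨⟨fun h => hef h.symm, h1⟩, by rw [← hcef]; exact hceJ₁⟩
              · exact Or.inr ⟨⟨hgf, h1⟩, h3⟩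
        have hInter : E'.filter (fun g => color g ∈ (J₁ ∩ J₂).erase (color e)) ⊆ A ∩ B := by
          intro g hg
          rw [Finset.mem_filter] at hg
          obtain ⟨hgE, hgc⟩ := hg
          rw [Finset.mem_erase, Finset.mem_inter] at hgc
          obtain ⟨hgc0, hgc1, hgc2⟩ := hgc
          rw [Finset.mem_inter, hA, hB, Finset.mem_filter, Finset.mem_filter,
            Finset.mem_erase, Finset.mem_erase]
          refine ⟨⟨⟨?_, hgE⟩, hgc1⟩, ⟨⟨?_, hgE⟩, hgc2⟩⟩
          · rintro rfl; exact hgc0 rfl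
          · rintro rfl; rw [← hcef] at hgc0; exact hgc0 rfl
        have hsup := ncomp_supermodular (ends := ends) A B
        have hk1 := hcond (J₁ ∪ J₂) (Finset.union_subset hJ₁sub hJ₂sub)
        have hk2 := hcond ((J₁ ∩ J₂).erase (color e))
          ((Finset.erase_subset _ _).trans ((Finset.inter_subset_left).trans hJ₁sub))
        have hmono : ncomp ends ↑(A ∩ B) ≤
            ncomp ends ↑(E'.filter (fun g => color g ∈ (J₁ ∩ J₂).erase (color e))) :=
          ncomp_le_of_subset (by exact_mod_cast Finset.coe_subset.mpr hInter)
        rw [hUnion] at hsup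
        have hcu : (J₁ ∪ J₂).card + (J₁ ∩ J₂).card = J₁.card + J₂.card :=
          Finset.card_union_add_card_inter J₁ J₂
        have hce : ((J₁ ∩ J₂).erase (color e)).card + 1 = (J₁ ∩ J₂).card :=
          Finset.card_erase_add_one (Finset.mem_inter.mpr ⟨hceJ₁, hceJ₂⟩)
        omega
      rcases key with hk | hk
      · obtain ⟨F, hF1, hF2, hF3⟩ := ih (E'.erase e) (by
          have := Finset.card_erase_of_mem heE
          omega) hk
        exact ⟨F, hF1.trans (Finset.erase_subset e E'), hF2, hF3⟩
      · obtain ⟨F, hF1, hF2, hF3⟩ := ih (E'.erase f) (by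
          have := Finset.card_erase_of_mem hfE
          omega) hk
        exact ⟨F, hF1.trans (Finset.erase_subset f E'), hF2, hF3⟩

end Rado


/-- A finite edge-colored graph `G = (V, E)` (endpoint map `ends`,
coloring `color`) contains a rainbow spanning tree if and only if for every partition
`P` of `V` into nonempty classes, the set of edges joining different classes of `P`
meets at least `|P| - 1` distinct color classes. -/
theorem rainbow_spanning_tree_iff {V E C : Type*} [Fintype V] [DecidableEq V] [Fintype E]
    (ends : E → Sym2 V) (color : E → C) :
    (∃ T : Set E, IsSpanningTree ends T ∧ Rainbow color T) ↔
      ∀ P : Finpartition (Finset.univ : Finset V),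
        P.parts.card - 1 ≤
          {c : C | ∃ e : E, color e = c ∧
            ∃ x y : V, ends e = s(x, y) ∧ P.part x ≠ P.part y}.ncard := by
  classical
  constructor
  · rintro ⟨T, ⟨hTconn, -⟩, hTrb⟩ P
    set Tf := (Set.toFinite T).toFinset with hTfdef
    have hTfc : (↑Tf : Set E) = T := Set.Finite.coe_toFinset _
    set D := Tf.filter (fun e => ∃ x y, ends e = s(x, y) ∧ P.part x ≠ P.part y) with hD
    have hpartconst : ∀ a b : V, Conn ends ↑(Tf \ D) a b → P.part a = P.part b := by
      intro a b hab
      induction hab with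
      | refl => rfl
      | tail _ hstep ihp =>
        rename_i u v _
        obtain ⟨g, hg, hE⟩ := hstep
        have hg' : g ∈ Tf \ D := by exact_mod_cast hg
        rw [Finset.mem_sdiff] at hg'
        have hnc : ¬ ∃ x y, ends g = s(x, y) ∧ P.part x ≠ P.part y := by
          intro hx
          exact hg'.2 (Finset.mem_filter.mpr ⟨hg'.1, hx⟩)
        have heq : P.part u = P.part v := by
          by_contra hne
          exact hnc ⟨u, v, hE, hne⟩
        exact ihp.trans heq
    have h1 : P.parts.card ≤ ncomp ends ↑(Tf \ D) := by
      have hinj : Function.Injective (fun p : {t // t ∈ P.parts} =>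
          Quotient.mk (connSetoid ends ↑(Tf \ D)) (P.nonempty_of_mem_parts p.2).choose) := by
        intro p q hpq
        have hconnpq : Conn ends ↑(Tf \ D) (P.nonempty_of_mem_parts p.2).choose
            (P.nonempty_of_mem_parts q.2).choose := Quotient.exact hpq
        have e1 : P.part (P.nonempty_of_mem_parts p.2).choose = p.1 :=
          P.part_eq_of_mem p.2 (P.nonempty_of_mem_parts p.2).choose_spec
        have e2 : P.part (P.nonempty_of_mem_parts q.2).choose = q.1 :=
          P.part_eq_of_mem q.2 (P.nonempty_of_mem_parts q.2).choose_spec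
        refine Subtype.ext ?_
        rw [← e1, ← e2]
        exact hpartconst _ _ hconnpq
      have hc := Nat.card_le_card_of_injective _ hinj
      rwa [Nat.card_eq_fintype_card, Fintype.card_coe] at hc
    have h2 : ncomp ends ↑(Tf \ D) ≤ ncomp ends ↑Tf + D.card := ncomp_sdiff_le Tf D
    have h3 : ncomp ends ↑Tf ≤ 1 :=
      (connects_iff_ncomp_le_one _).mp (by rw [hTfc]; exact hTconn)
    have hDsub : (↑D : Set E) ⊆ T := by
      rw [← hTfc]
      exact_mod_cast Finset.coe_subset.mpr (Finset.filter_subset _ Tf)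
    have hinjD : Set.InjOn color ↑D := fun a ha b hb hab =>
      hTrb a (hDsub ha) b (hDsub hb) hab
    have himg : color '' ↑D ⊆ {c : C | ∃ e : E, color e = c ∧
        ∃ x y : V, ends e = s(x, y) ∧ P.part x ≠ P.part y} := by
      rintro c ⟨g, hg, rfl⟩
      have hg' : g ∈ D := by exact_mod_cast hg
      rw [hD, Finset.mem_filter] at hg'
      obtain ⟨-, x, y, hxy, hne⟩ := hg'
      exact ⟨g, rfl, x, y, hxy, hne⟩
    have hfin : {c : C | ∃ e : E, color e = c ∧
        ∃ x y : V, ends e = s(x, y) ∧ P.part x ≠ P.part y}.Finite := by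
      apply Set.Finite.subset (Set.finite_range color)
      rintro c ⟨g, rfl, -⟩
      exact ⟨g, rfl⟩
    have h4 : D.card ≤ {c : C | ∃ e : E, color e = c ∧
        ∃ x y : V, ends e = s(x, y) ∧ P.part x ≠ P.part y}.ncard := by
      calc D.card = (color '' ↑D).ncard := by
            rw [Set.ncard_image_of_injOn hinjD, Set.ncard_coe_finset]
        _ ≤ _ := Set.ncard_le_ncard himg hfin
    omega
  · intro hP
    have hcond : ∀ J : Finset C, J ⊆ Finset.univ.image color →
        ncomp ends ↑(Finset.univ.filter (fun e => color e ∈ J)) + J.card ≤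
          (Finset.univ.image color).card + 1 := by
      intro J hJ
      set X := Finset.univ.filter (fun e : E => color e ∈ J) with hX
      set s := connSetoid ends (↑X : Set E) with hs
      haveI : DecidableRel s.r := fun a b => Classical.propDecidable _
      set P := Finpartition.ofSetoid s with hPdef
      have hpart : ∀ a b : V, Conn ends ↑X a b → P.part a = P.part b := by
        intro a b hab
        have hb : b ∈ P.part a := Finpartition.mem_part_ofSetoid_iff_rel.mpr hab
        exact (P.part_eq_of_mem (P.part_mem.mpr (Finset.mem_univ a)) hb).symm
      have hle : ncomp ends ↑X ≤ P.parts.card := by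
        have hinj : Function.Injective (Quotient.lift
            (fun a => (⟨P.part a, P.part_mem.mpr (Finset.mem_univ a)⟩ : {t // t ∈ P.parts}))
            (fun a b hab => Subtype.ext (hpart a b hab))) := by
          rintro ⟨a⟩ ⟨b⟩ hab
          have hpp : P.part a = P.part b := congrArg Subtype.val hab
          apply Quotient.sound
          show s.r a b
          apply Finpartition.mem_part_ofSetoid_iff_rel.mp
          rw [hpp]
          exact P.mem_part (Finset.mem_univ b)
        have hc := Nat.card_le_card_of_injective _ hinj
        rw [Nat.card_eq_fintype_card (α := {t // t ∈ P.parts}), Fintype.card_coe] at hc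
        exact hc
      have hPineq := hP P
      have hsub : {c : C | ∃ e : E, color e = c ∧
          ∃ x y : V, ends e = s(x, y) ∧ P.part x ≠ P.part y} ⊆
          ↑(Finset.univ.image color \ J) := by
        rintro c ⟨g, rfl, x, y, hxy, hne⟩
        refine Finset.mem_coe.mpr (Finset.mem_sdiff.mpr
          ⟨Finset.mem_image_of_mem color (Finset.mem_univ g), ?_⟩)
        intro hcJ
        apply hne
        apply hpart
        exact Relation.ReflTransGen.single ⟨g, by
          exact_mod_cast Finset.mem_filter.mpr ⟨Finset.mem_univ g, hcJ⟩, hxy⟩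
      have hfin : (↑(Finset.univ.image color \ J) : Set C).Finite := Finset.finite_toSet _
      have hncard := Set.ncard_le_ncard hsub hfin
      rw [Set.ncard_coe_finset] at hncard
      have hcds : (Finset.univ.image color \ J).card + J.card =
          (Finset.univ.image color).card := Finset.card_sdiff_add_card_eq_card hJ
      omega
    obtain ⟨F, -, hFconn, hFrb⟩ := rado_aux (Fintype.card E) Finset.univ
      (le_of_eq (Finset.card_univ)) hcond
    obtain ⟨T, hTsub, hTtree⟩ := exists_spanning_tree_subset hFconn
    refine ⟨↑T, hTtree, fun a ha b hb hab => ?_⟩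
    exact hFrb a (by exact_mod_cast hTsub ha) b (by exact_mod_cast hTsub hb) hab

end RainbowTreeCriterion
end
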